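/- arXiv:2202.01177 — 9 statements merged into one kernel-verified Lean document; each statement's English description precedes it below -/
import Mathlib

section
/- Equidistant-point symmetry of the Ruijsenaars–Schneider velocity sums (Lemma 1 of the paper): for x_j = j/N, for every k with 1 ≤ k ≤ N and every l, m ∈ {1,…,N}, ∑_{I ⊆ {1,…,N}, |I| = k, l ∈ I} ∏_{i∈I, j∉I} φ(x_j − x_i) = ∑_{I' ⊆ {1,…,N}, |I'| = k, m ∈ I'} ∏_{i∈I', j∉I'} φ(x_j − x_i). -/
open Complex Finset

/-- The odd theta function `ϑ(z|τ)`. -/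
noncomputable def ϑ (τ : ℂ) (z : ℂ) : ℂ :=
  -∑' k : ℤ, Complex.exp (Real.pi * Complex.I * τ * ((k : ℂ) + 1 / 2) ^ 2
      + 2 * Real.pi * Complex.I * (z + 1 / 2) * ((k : ℂ) + 1 / 2))

/-- The Kronecker elliptic function `φ(z) = ϑ'(0)·ϑ(z+hbar)/(ϑ(z)·ϑ(hbar))`. -/
noncomputable def φ₁ (τ hbar z : ℂ) : ℂ :=
  deriv (ϑ τ) 0 * ϑ τ (z + hbar) / (ϑ τ z * ϑ τ hbar)

lemma theta_add_one (τ z : ℂ) : ϑ τ (z + 1) = -ϑ τ z := by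
  unfold ϑ
  have h : ∀ k : ℤ,
      Complex.exp (Real.pi * Complex.I * τ * ((k : ℂ) + 1 / 2) ^ 2
        + 2 * Real.pi * Complex.I * ((z + 1) + 1 / 2) * ((k : ℂ) + 1 / 2))
      = -Complex.exp (Real.pi * Complex.I * τ * ((k : ℂ) + 1 / 2) ^ 2
        + 2 * Real.pi * Complex.I * (z + 1 / 2) * ((k : ℂ) + 1 / 2)) := by
    intro k
    have e : Real.pi * Complex.I * τ * ((k : ℂ) + 1 / 2) ^ 2
        + 2 * Real.pi * Complex.I * ((z + 1) + 1 / 2) * ((k : ℂ) + 1 / 2)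
        = (Real.pi * Complex.I * τ * ((k : ℂ) + 1 / 2) ^ 2
          + 2 * Real.pi * Complex.I * (z + 1 / 2) * ((k : ℂ) + 1 / 2))
          + ((k : ℂ) * (2 * Real.pi * Complex.I) + Real.pi * Complex.I) := by ring
    rw [e]
    simp only [Complex.exp_add]
    rw [Complex.exp_int_mul_two_pi_mul_I, Complex.exp_pi_mul_I]
    ring
  simp only [h, tsum_neg, neg_neg]

lemma phi_add_one (τ hbar z : ℂ) : φ₁ τ hbar (z + 1) = φ₁ τ hbar z := by
  unfold φ₁
  rw [show z + 1 + hbar = (z + hbar) + 1 by ring, theta_add_one, theta_add_one,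
    mul_neg, neg_mul, neg_div_neg_eq]

lemma phi_add_int (τ hbar z : ℂ) (n : ℤ) : φ₁ τ hbar (z + n) = φ₁ τ hbar z := by
  induction n using Int.induction_on with
  | zero => simp
  | succ n ih =>
    have e : z + ((n : ℤ) + 1 : ℤ) = (z + (n : ℤ)) + 1 := by push_cast; ring
    rw [e, phi_add_one, ih]
  | pred n ih =>
    have e : z + (-(n : ℤ) : ℤ) = (z + (-(n : ℤ) - 1 : ℤ)) + 1 := by push_cast; ring
    rw [e, phi_add_one] at ih
    exact ih

/-- Cyclic rotation of `{1,…,N}` by `d`, extended by the identity. -/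
def rot (N d : ℕ) (j : ℕ) : ℕ :=
  if j ∈ Finset.Icc 1 N then (j - 1 + d) % N + 1 else j

lemma rot_mem {N d j : ℕ} (hN : 0 < N) (hj : j ∈ Finset.Icc 1 N) :
    rot N d j ∈ Finset.Icc 1 N := by
  rw [rot, if_pos hj]
  have := Nat.mod_lt (j - 1 + d) hN
  simp only [Finset.mem_Icc]
  omega

lemma rot_leftinv {N d d' : ℕ} (hN : 0 < N) (hdd : (d + d') % N = 0) (j : ℕ) :
    rot N d' (rot N d j) = j := by
  by_cases hj : j ∈ Finset.Icc 1 N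
  · have h1 : rot N d j = (j - 1 + d) % N + 1 := by rw [rot, if_pos hj]
    have h2 : (j - 1 + d) % N + 1 ∈ Finset.Icc 1 N := h1 ▸ rot_mem hN hj
    rw [h1, rot, if_pos h2]
    have h3 : ((j - 1 + d) % N + 1 - 1 + d') % N = (j - 1 + d + d') % N := by
      simp only [Nat.add_sub_cancel]
      exact Nat.mod_add_mod _ _ _
    have h4 : (j - 1 + d + d') % N = (j - 1) % N := by
      rw [Nat.add_assoc, Nat.add_mod, hdd, Nat.add_zero, Nat.mod_mod_of_dvd _ dvd_rfl]
    have h5 : (j - 1) % N = j - 1 := by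
      simp only [Finset.mem_Icc] at hj
      exact Nat.mod_eq_of_lt (by omega)
    simp only [Finset.mem_Icc] at hj
    rw [h3, h4, h5]
    omega
  · have h1 : rot N d j = j := by rw [rot, if_neg hj]
    rw [h1, rot, if_neg hj]

lemma rot_inj {N d d' : ℕ} (hN : 0 < N) (hdd : (d + d') % N = 0) :
    Function.Injective (rot N d) :=
  Function.LeftInverse.injective (g := rot N d') (rot_leftinv hN hdd)

lemma rot_sub {N d i j : ℕ} (hN : 0 < N) (hi : i ∈ Finset.Icc 1 N)
    (hj : j ∈ Finset.Icc 1 N) :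
    ∃ t : ℤ, (rot N d j : ℤ) - (rot N d i : ℤ) = (j : ℤ) - (i : ℤ) + (N : ℤ) * t := by
  rw [rot, if_pos hj, rot, if_pos hi]
  refine ⟨((i - 1 + d) / N : ℕ) - ((j - 1 + d) / N : ℕ), ?_⟩
  have ej : N * ((j - 1 + d) / N) + (j - 1 + d) % N = j - 1 + d := Nat.div_add_mod _ _
  have ei : N * ((i - 1 + d) / N) + (i - 1 + d) % N = i - 1 + d := Nat.div_add_mod _ _
  simp only [Finset.mem_Icc] at hi hj
  have ej' : (N : ℤ) * ((j - 1 + d) / N : ℕ) + ((j - 1 + d) % N : ℕ)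
      = (j : ℤ) - 1 + d := by
    have hc : ((j - 1 + d : ℕ) : ℤ) = (j : ℤ) - 1 + d := by omega
    rw [← hc]
    exact_mod_cast ej
  have ei' : (N : ℤ) * ((i - 1 + d) / N : ℕ) + ((i - 1 + d) % N : ℕ)
      = (i : ℤ) - 1 + d := by
    have hc : ((i - 1 + d : ℕ) : ℤ) = (i : ℤ) - 1 + d := by omega
    rw [← hc]
    exact_mod_cast ei
  simp only [Nat.cast_add, Nat.cast_one]
  linear_combination ej' - ei'

/-- Lemma 1 of the paper: for `x_j = j/N`, the sum over `k`-element subsets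
containing a fixed index is independent of that index. -/
theorem velocity_sum_symmetry (τ : ℂ) (hτ : 0 < τ.im) (hbar : ℂ) (N : ℕ) (hN : 0 < N)
    (k : ℕ) (hk1 : 1 ≤ k) (hkN : k ≤ N) (l m : ℕ)
    (hl : l ∈ Finset.Icc 1 N) (hm : m ∈ Finset.Icc 1 N) :
    ∑ I ∈ ((Finset.Icc 1 N).powersetCard k).filter (fun I => l ∈ I),
      ∏ i ∈ I, ∏ j ∈ Finset.Icc 1 N \ I, φ₁ τ hbar ((j : ℂ) / N - (i : ℂ) / N)
    = ∑ I ∈ ((Finset.Icc 1 N).powersetCard k).filter (fun I => m ∈ I),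
        ∏ i ∈ I, ∏ j ∈ Finset.Icc 1 N \ I, φ₁ τ hbar ((j : ℂ) / N - (i : ℂ) / N) := by
  have hl' := Finset.mem_Icc.mp hl
  have hm' := Finset.mem_Icc.mp hm
  set d : ℕ := (m + N - l) % N with hd
  set d' : ℕ := (l + N - m) % N with hd'
  have hdd : (d + d') % N = 0 := by
    rw [hd, hd', ← Nat.add_mod]
    have h2 : (m + N - l) + (l + N - m) = 2 * N := by omega
    rw [h2, Nat.mul_mod_left]
  have hdd' : (d' + d) % N = 0 := by rwa [Nat.add_comm]
  have hrl : rot N d l = m := by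
    rw [rot, if_pos hl, hd]
    have h1 : (l - 1 + (m + N - l) % N) % N = (l - 1 + (m + N - l)) % N :=
      Nat.add_mod_mod _ _ _
    have h2 : l - 1 + (m + N - l) = (m - 1) + N := by omega
    rw [h1, h2, Nat.add_mod_right, Nat.mod_eq_of_lt (by omega)]
    omega
  have hIcc : (Finset.Icc 1 N).image (rot N d) = Finset.Icc 1 N := by
    apply Finset.eq_of_subset_of_card_le
    · intro x hx
      obtain ⟨y, hy, rfl⟩ := Finset.mem_image.mp hx
      exact rot_mem hN hy
    · rw [Finset.card_image_of_injective _ (rot_inj hN hdd)]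
  have hNe : (N : ℂ) ≠ 0 := Nat.cast_ne_zero.mpr hN.ne'
  refine Finset.sum_bij' (fun I _ => I.image (rot N d)) (fun I _ => I.image (rot N d'))
    ?_ ?_ ?_ ?_ ?_
  · intro I hI
    rw [Finset.mem_filter, Finset.mem_powersetCard] at hI ⊢
    obtain ⟨⟨hsub, hcard⟩, hlI⟩ := hI
    refine ⟨⟨?_, ?_⟩, ?_⟩
    · intro x hx
      obtain ⟨y, hy, rfl⟩ := Finset.mem_image.mp hx
      exact rot_mem hN (hsub hy)
    · rw [Finset.card_image_of_injective _ (rot_inj hN hdd), hcard]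
    · rw [← hrl]
      exact Finset.mem_image_of_mem _ hlI
  · intro I hI
    rw [Finset.mem_filter, Finset.mem_powersetCard] at hI ⊢
    obtain ⟨⟨hsub, hcard⟩, hmI⟩ := hI
    refine ⟨⟨?_, ?_⟩, ?_⟩
    · intro x hx
      obtain ⟨y, hy, rfl⟩ := Finset.mem_image.mp hx
      exact rot_mem hN (hsub hy)
    · rw [Finset.card_image_of_injective _ (rot_inj hN hdd'), hcard]
    · have hm2 : rot N d' m = l := by rw [← hrl, rot_leftinv hN hdd]
      rw [← hm2]
      exact Finset.mem_image_of_mem _ hmI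
  · intro I hI
    rw [Finset.image_image]
    have hcomp : rot N d' ∘ rot N d = id := funext (rot_leftinv hN hdd)
    rw [hcomp, Finset.image_id]
  · intro I hI
    rw [Finset.image_image]
    have hcomp : rot N d ∘ rot N d' = id := funext (rot_leftinv hN hdd')
    rw [hcomp, Finset.image_id]
  · intro I hI
    rw [Finset.mem_filter, Finset.mem_powersetCard] at hI
    obtain ⟨⟨hsub, hcard⟩, hlI⟩ := hI
    have hsd : Finset.Icc 1 N \ I.image (rot N d)
        = (Finset.Icc 1 N \ I).image (rot N d) := by
      rw [Finset.image_sdiff _ _ (rot_inj hN hdd), hIcc]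
    rw [hsd, Finset.prod_image (fun x _ y _ h => rot_inj hN hdd h)]
    refine Finset.prod_congr rfl fun i hiI => ?_
    rw [Finset.prod_image (fun x _ y _ h => rot_inj hN hdd h)]
    refine Finset.prod_congr rfl fun j hjI => ?_
    have hiIcc : i ∈ Finset.Icc 1 N := hsub hiI
    have hjIcc : j ∈ Finset.Icc 1 N := (Finset.mem_sdiff.mp hjI).1
    obtain ⟨t, ht⟩ := rot_sub (d := d) hN hiIcc hjIcc
    have htc : ((rot N d j : ℕ) : ℂ) - ((rot N d i : ℕ) : ℂ)
        = ((j : ℂ) - (i : ℂ)) + (N : ℂ) * (t : ℂ) := by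
      exact_mod_cast congrArg (fun z : ℤ => (z : ℂ)) ht
    have hq : ((rot N d j : ℕ) : ℂ) / N - ((rot N d i : ℕ) : ℂ) / N
        = ((j : ℂ) / N - (i : ℂ) / N) + (t : ℂ) := by
      rw [← sub_div, htc, add_div, sub_div, mul_div_cancel_left₀ _ hNe]
    rw [hq, phi_add_int]
end

section
/- Vanishing sum of f over equidistant points (identity (t14), first part of Lemma 2 of the paper): for every m ∈ {1,…,N}, ∑_{l=1,…,N, l≠m} f(x_l − x_m) = 0. -/
open Complex Finset

/-- The first Eisenstein function `E₁(z) = ϑ'(z)/ϑ(z)`. -/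
noncomputable def E₁ (τ z : ℂ) : ℂ := deriv (ϑ τ) z / ϑ τ z

/-- `g(x) = E₁(ħ+x) − E₁(x)`. -/
noncomputable def gfun (τ hbar x : ℂ) : ℂ := E₁ τ (hbar + x) - E₁ τ x

/-- `f(x) = g(x) − g(−x)`. -/
noncomputable def ffun (τ hbar x : ℂ) : ℂ := gfun τ hbar x - gfun τ hbar (-x)

lemma E1_add_one (τ z : ℂ) : E₁ τ (z + 1) = E₁ τ z := by
  have hth : (fun w => ϑ τ (w + 1)) = fun w => -ϑ τ w := funext fun w => theta_add_one τ w
  have hd : deriv (ϑ τ) (z + 1) = -deriv (ϑ τ) z := by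
    rw [← deriv_comp_add_const (ϑ τ) 1 z, hth, deriv.fun_neg]
  unfold E₁
  rw [hd, theta_add_one, neg_div_neg_eq]

lemma gfun_add_one (τ hbar x : ℂ) : gfun τ hbar (x + 1) = gfun τ hbar x := by
  unfold gfun
  rw [show hbar + (x + 1) = (hbar + x) + 1 by ring, E1_add_one, E1_add_one]

lemma ffun_add_one (τ hbar x : ℂ) : ffun τ hbar (x + 1) = ffun τ hbar x := by
  unfold ffun
  rw [gfun_add_one, show (-x : ℂ) = -(x + 1) + 1 by ring, gfun_add_one]

lemma ffun_sub_one (τ hbar x : ℂ) : ffun τ hbar (x - 1) = ffun τ hbar x := by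
  rw [← ffun_add_one τ hbar (x - 1), sub_add_cancel]

lemma ffun_neg (τ hbar x : ℂ) : ffun τ hbar (-x) = -ffun τ hbar x := by
  unfold ffun
  rw [neg_neg]; ring

/-- The pairing involution: the unique element of `[1,N]` congruent to `2m - l` mod `N`. -/
def pairIdx (m N l : ℕ) : ℕ :=
  if l < 2 * m then (if 2 * m - l ≤ N then 2 * m - l else 2 * m - l - N)
  else 2 * m + N - l

/-- Identity (t14) of the paper: the sum of `f` over the equidistant points vanishes. -/
theorem f_sum_vanishes (τ : ℂ) (hτ : 0 < τ.im) (hbar : ℂ) (N : ℕ) (hN : 0 < N)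
    (m : ℕ) (hm : m ∈ Finset.Icc 1 N) :
    ∑ l ∈ (Finset.Icc 1 N).erase m, ffun τ hbar ((l : ℂ) / N - (m : ℂ) / N) = 0 := by
  rw [Finset.mem_Icc] at hm
  obtain ⟨hm1, hm2⟩ := hm
  have hNC : (N : ℂ) ≠ 0 := Nat.cast_ne_zero.mpr hN.ne'
  have hmem : ∀ l, l ∈ (Finset.Icc 1 N).erase m → pairIdx m N l ∈ (Finset.Icc 1 N).erase m := by
    intro l hl
    rw [Finset.mem_erase, Finset.mem_Icc] at hl ⊢
    obtain ⟨hlm, hl1, hl2⟩ := hl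
    unfold pairIdx
    split_ifs <;> omega
  have key : ∀ l, l ≠ m → 1 ≤ l → l ≤ N → ffun τ hbar ((pairIdx m N l : ℂ) / N - (m : ℂ) / N)
      = -ffun τ hbar ((l : ℂ) / N - (m : ℂ) / N) := by
    intro l hlm hl1 hl2
    unfold pairIdx
    split_ifs with h1 h2
    · have hc : ((2 * m - l : ℕ) : ℂ) = 2 * (m : ℂ) - l := by
        push_cast [Nat.cast_sub h1.le]; ring
      rw [hc, show (2 * (m : ℂ) - l) / N - (m : ℂ) / N = -((l : ℂ) / N - (m : ℂ) / N) by
          field_simp; ring, ffun_neg]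
    · have hc : ((2 * m - l - N : ℕ) : ℂ) = 2 * (m : ℂ) - l - N := by
        push_cast [Nat.cast_sub (by omega : N ≤ 2 * m - l), Nat.cast_sub h1.le]; ring
      rw [hc, show (2 * (m : ℂ) - l - N) / N - (m : ℂ) / N
          = -((l : ℂ) / N - (m : ℂ) / N) - 1 by field_simp; ring, ffun_sub_one, ffun_neg]
    · have hc : ((2 * m + N - l : ℕ) : ℂ) = 2 * (m : ℂ) + N - l := by
        push_cast [Nat.cast_sub (by omega : l ≤ 2 * m + N)]; ring
      rw [hc, show (2 * (m : ℂ) + N - l) / N - (m : ℂ) / N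
          = -((l : ℂ) / N - (m : ℂ) / N) + 1 by field_simp; ring, ffun_add_one, ffun_neg]
  refine Finset.sum_involution (fun l _ => pairIdx m N l) ?_ ?_ hmem ?_
  · -- pairs sum to zero
    intro l hl
    rw [Finset.mem_erase, Finset.mem_Icc] at hl
    obtain ⟨hlm, hl1, hl2⟩ := hl
    rw [key l hlm hl1 hl2]; ring
  · -- no fixed points with nonzero value
    intro l hl hne hfix
    exfalso
    apply hne
    rw [Finset.mem_erase, Finset.mem_Icc] at hl
    obtain ⟨hlm, hl1, hl2⟩ := hl
    have hk := key l hlm hl1 hl2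
    rw [hfix] at hk
    exact CharZero.eq_neg_self_iff.mp hk
  · -- involution
    intro l hl
    have h := hmem l hl
    rw [Finset.mem_erase, Finset.mem_Icc] at hl h
    obtain ⟨hlm, hl1, hl2⟩ := hl
    show pairIdx m N (pairIdx m N l) = l
    unfold pairIdx
    split_ifs <;> omega
end

section
/- Equilibrium condition for the elliptic Ruijsenaars–Schneider flows (Lemma 3 of the paper, identity w_m^{k} = 0): for every k with 1 ≤ k ≤ N and every m ∈ {1,…,N}, ∑_{I ⊆ {1,…,N}, |I| = k, m ∈ I} ( ∏_{i∈I, j∉I} φ(x_j − x_i) ) · ( ∑_{l ∉ I} g(x_l − x_m) ) = ∑_{I ⊆ {1,…,N}, |I| = k, m ∉ I} ( ∏_{i∈I, j∉I} φ(x_j − x_i) ) · ( ∑_{l ∈ I} g(x_m − x_l) ). -/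
open Complex Finset

lemma theta_deriv_add_one (τ z : ℂ) : deriv (ϑ τ) (z + 1) = -deriv (ϑ τ) z := by
  have h1 : deriv (fun w => ϑ τ (w + 1)) z = deriv (ϑ τ) (z + 1) :=
    deriv_comp_add_const (ϑ τ) 1 z
  rw [← h1]
  have h2 : (fun w => ϑ τ (w + 1)) = fun w => -ϑ τ w := funext fun w => theta_add_one τ w
  rw [h2, deriv.fun_neg]

lemma gfun_add_int (τ hbar x : ℂ) (n : ℤ) : gfun τ hbar (x + n) = gfun τ hbar x := by
  induction n using Int.induction_on with
  | zero => simp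
  | succ n ih =>
      rw [show (x + ((n : ℤ) + 1 : ℤ)) = (x + (n : ℤ)) + 1 by push_cast; ring,
        gfun_add_one, ih]
  | pred n ih =>
      have h := gfun_add_one τ hbar (x + (-(n : ℤ) - 1 : ℤ))
      rw [show ((x + (-(n:ℤ) - 1 : ℤ)) + 1) = x + (-(n:ℤ) : ℤ) by push_cast; ring] at h
      rw [h] at ih
      exact ih

/-- shift map on `{1,…,N}` -/
def sh (N r j : ℕ) : ℕ := (j - 1 + r) % N + 1

lemma sh_mem {N : ℕ} (hN : 0 < N) (r j : ℕ) : sh N r j ∈ Finset.Icc 1 N := by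
  have := Nat.mod_lt (j - 1 + r) hN
  simp only [sh, Finset.mem_Icc]
  omega

lemma sh_eq {N : ℕ} (r j : ℕ) (hj : j ∈ Finset.Icc 1 N) :
    sh N r j + N * ((j - 1 + r) / N) = j + r := by
  have h := Nat.mod_add_div (j - 1 + r) N
  simp only [Finset.mem_Icc] at hj
  simp only [sh]
  omega

lemma sh_sh {N : ℕ} (hN : 0 < N) {r r' : ℕ} (hrr : (r + r') % N = 0) {j : ℕ}
    (hj : j ∈ Finset.Icc 1 N) : sh N r' (sh N r j) = j := by
  simp only [Finset.mem_Icc] at hj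
  simp only [sh, Nat.add_sub_cancel, Nat.mod_add_mod]
  have h1 : (j - 1 + r + r') % N = (j - 1 + (r + r')) % N := by ring_nf
  obtain ⟨t, ht⟩ := (Nat.dvd_iff_mod_eq_zero).2 hrr
  rw [h1, ht, Nat.add_mul_mod_self_left, Nat.mod_eq_of_lt (by omega)]
  omega

lemma sh_cast {N : ℕ} (r j : ℕ) (hj : j ∈ Finset.Icc 1 N) :
    ((sh N r j : ℕ) : ℂ) = (j : ℂ) + r - N * ((j - 1 + r) / N : ℕ) := by
  have h := sh_eq r j hj
  have h2 : ((sh N r j + N * ((j - 1 + r) / N) : ℕ) : ℂ) = ((j + r : ℕ) : ℂ) := by rw [h]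
  push_cast at h2
  linear_combination h2

lemma phi_sh (τ hbar : ℂ) {N : ℕ} (hN : 0 < N) (r : ℕ) {i j : ℕ}
    (hi : i ∈ Finset.Icc 1 N) (hj : j ∈ Finset.Icc 1 N) :
    φ₁ τ hbar ((sh N r j : ℂ) / N - (sh N r i : ℂ) / N)
      = φ₁ τ hbar ((j : ℂ) / N - (i : ℂ) / N) := by
  have hNc : (N : ℂ) ≠ 0 := Nat.cast_ne_zero.2 hN.ne'
  have hj' := sh_cast r j hj
  have hi' := sh_cast r i hi
  set qj := ((j - 1 + r) / N : ℕ) with hqj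
  set qi := ((i - 1 + r) / N : ℕ) with hqi
  have key : (sh N r j : ℂ) / N - (sh N r i : ℂ) / N
      = ((j : ℂ) / N - (i : ℂ) / N) + (((qi : ℤ) - (qj : ℤ) : ℤ) : ℂ) := by
    rw [hj', hi']
    push_cast
    field_simp
    ring
  rw [key, phi_add_int]

lemma gfun_sh (τ hbar : ℂ) {N : ℕ} (hN : 0 < N) (r : ℕ) {i j : ℕ}
    (hi : i ∈ Finset.Icc 1 N) (hj : j ∈ Finset.Icc 1 N) :
    gfun τ hbar ((sh N r j : ℂ) / N - (sh N r i : ℂ) / N)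
      = gfun τ hbar ((j : ℂ) / N - (i : ℂ) / N) := by
  have hNc : (N : ℂ) ≠ 0 := Nat.cast_ne_zero.2 hN.ne'
  have hj' := sh_cast r j hj
  have hi' := sh_cast r i hi
  set qj := ((j - 1 + r) / N : ℕ) with hqj
  set qi := ((i - 1 + r) / N : ℕ) with hqi
  have key : (sh N r j : ℂ) / N - (sh N r i : ℂ) / N
      = ((j : ℂ) / N - (i : ℂ) / N) + (((qi : ℤ) - (qj : ℤ) : ℤ) : ℂ) := by
    rw [hj', hi']
    push_cast
    field_simp
    ring
  rw [key, gfun_add_int]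


lemma sh_injOn {N : ℕ} (hN : 0 < N) {r r' : ℕ} (hrr : (r + r') % N = 0) :
    ∀ a ∈ Finset.Icc 1 N, ∀ b ∈ Finset.Icc 1 N, sh N r a = sh N r b → a = b := by
  intro a ha b hb h
  have h1 := sh_sh hN hrr ha
  have h2 := sh_sh hN hrr hb
  rw [h] at h1
  rw [← h1]
  exact h2

lemma image_sh_sdiff {N : ℕ} (hN : 0 < N) {r r' : ℕ} (hrr : (r + r') % N = 0)
    (hrr' : (r' + r) % N = 0) {I : Finset ℕ} (hI : I ⊆ Finset.Icc 1 N) :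
    (Finset.Icc 1 N \ I).image (sh N r) = Finset.Icc 1 N \ I.image (sh N r) := by
  ext x
  simp only [Finset.mem_image, Finset.mem_sdiff]
  constructor
  · rintro ⟨y, ⟨hyS, hyI⟩, rfl⟩
    refine ⟨sh_mem hN r y, ?_⟩
    rintro ⟨z, hzI, hz⟩
    exact hyI (sh_injOn hN hrr z (hI hzI) y hyS hz ▸ hzI)
  · rintro ⟨hxS, hx⟩
    exact ⟨sh N r' x, ⟨sh_mem hN r' x,
      fun hmem => hx ⟨sh N r' x, hmem, sh_sh hN hrr' hxS⟩⟩, sh_sh hN hrr' hxS⟩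

lemma image_image_sh {N : ℕ} (hN : 0 < N) {r r' : ℕ} (hrr : (r + r') % N = 0)
    {I : Finset ℕ} (hI : I ⊆ Finset.Icc 1 N) :
    (I.image (sh N r)).image (sh N r') = I := by
  rw [Finset.image_image]
  have h : ∀ a ∈ I, (sh N r' ∘ sh N r) a = id a := fun a ha => sh_sh hN hrr (hI ha)
  rw [Finset.image_congr fun a ha => h a (Finset.mem_coe.1 ha), Finset.image_id]

lemma prod_sh (τ hbar : ℂ) {N : ℕ} (hN : 0 < N) {r r' : ℕ} (hrr : (r + r') % N = 0)
    (hrr' : (r' + r) % N = 0) {I : Finset ℕ} (hI : I ⊆ Finset.Icc 1 N) :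
    (∏ i ∈ I.image (sh N r), ∏ j ∈ Finset.Icc 1 N \ I.image (sh N r),
        φ₁ τ hbar ((j : ℂ) / N - (i : ℂ) / N))
    = ∏ i ∈ I, ∏ j ∈ Finset.Icc 1 N \ I, φ₁ τ hbar ((j : ℂ) / N - (i : ℂ) / N) := by
  rw [← image_sh_sdiff hN hrr hrr' hI]
  rw [Finset.prod_image (fun x hx y hy h => sh_injOn hN hrr x (hI hx) y (hI hy) h)]
  refine Finset.prod_congr rfl fun i hi => ?_
  rw [Finset.prod_image (fun x hx y hy h =>
    sh_injOn hN hrr x (Finset.mem_sdiff.1 hx).1 y (Finset.mem_sdiff.1 hy).1 h)]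
  refine Finset.prod_congr rfl fun j hj => ?_
  exact phi_sh τ hbar hN r (hI hi) (Finset.mem_sdiff.1 hj).1

lemma sumg_out (τ hbar : ℂ) {N : ℕ} (hN : 0 < N) {r r' : ℕ} (hrr : (r + r') % N = 0)
    (hrr' : (r' + r) % N = 0) {I : Finset ℕ} (hI : I ⊆ Finset.Icc 1 N) {m : ℕ}
    (hm : m ∈ Finset.Icc 1 N) :
    ∑ l ∈ Finset.Icc 1 N \ I.image (sh N r), gfun τ hbar ((l : ℂ)/N - (sh N r m : ℂ)/N)
    = ∑ l ∈ Finset.Icc 1 N \ I, gfun τ hbar ((l : ℂ)/N - (m : ℂ)/N) := by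
  rw [← image_sh_sdiff hN hrr hrr' hI, Finset.sum_image (fun x hx y hy h =>
    sh_injOn hN hrr x (Finset.mem_sdiff.1 hx).1 y (Finset.mem_sdiff.1 hy).1 h)]
  exact Finset.sum_congr rfl fun l hl => gfun_sh τ hbar hN r hm (Finset.mem_sdiff.1 hl).1

lemma sumg_in (τ hbar : ℂ) {N : ℕ} (hN : 0 < N) {r r' : ℕ} (hrr : (r + r') % N = 0)
    {I : Finset ℕ} (hI : I ⊆ Finset.Icc 1 N) {m : ℕ} (hm : m ∈ Finset.Icc 1 N) :
    ∑ l ∈ I.image (sh N r), gfun τ hbar ((sh N r m : ℂ)/N - (l : ℂ)/N)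
    = ∑ l ∈ I, gfun τ hbar ((m : ℂ)/N - (l : ℂ)/N) := by
  rw [Finset.sum_image (fun x hx y hy h => sh_injOn hN hrr x (hI hx) y (hI hy) h)]
  exact Finset.sum_congr rfl fun l hl => gfun_sh τ hbar hN r (hI hl) hm

noncomputable def Afun (τ hbar : ℂ) (N k m : ℕ) : ℂ :=
  ∑ I ∈ ((Finset.Icc 1 N).powersetCard k).filter (fun I => m ∈ I),
    (∏ i ∈ I, ∏ j ∈ Finset.Icc 1 N \ I, φ₁ τ hbar ((j : ℂ)/N - (i : ℂ)/N)) *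
      (∑ l ∈ Finset.Icc 1 N \ I, gfun τ hbar ((l : ℂ)/N - (m : ℂ)/N))

noncomputable def Bfun (τ hbar : ℂ) (N k m : ℕ) : ℂ :=
  ∑ I ∈ ((Finset.Icc 1 N).powersetCard k).filter (fun I => m ∉ I),
    (∏ i ∈ I, ∏ j ∈ Finset.Icc 1 N \ I, φ₁ τ hbar ((j : ℂ)/N - (i : ℂ)/N)) *
      (∑ l ∈ I, gfun τ hbar ((m : ℂ)/N - (l : ℂ)/N))

lemma Afun_shift (τ hbar : ℂ) {N k : ℕ} (hN : 0 < N) {r r' m : ℕ}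
    (hrr : (r + r') % N = 0) (hrr' : (r' + r) % N = 0) (hm : m ∈ Finset.Icc 1 N) :
    Afun τ hbar N k (sh N r m) = Afun τ hbar N k m := by
  unfold Afun
  refine (Finset.sum_nbij' (fun I => I.image (sh N r)) (fun I => I.image (sh N r'))
    ?_ ?_ ?_ ?_ ?_).symm
  · intro I hI
    rw [Finset.mem_filter, Finset.mem_powersetCard] at hI ⊢
    obtain ⟨⟨hIS, hIcard⟩, hmI⟩ := hI
    refine ⟨⟨fun x hx => ?_, ?_⟩, Finset.mem_image_of_mem _ hmI⟩
    · obtain ⟨y, hy, rfl⟩ := Finset.mem_image.1 hx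
      exact sh_mem hN r y
    · rw [Finset.card_image_of_injOn (fun x hx y hy h =>
        sh_injOn hN hrr x (hIS (Finset.mem_coe.1 hx)) y (hIS (Finset.mem_coe.1 hy)) h)]
      exact hIcard
  · intro I hI
    rw [Finset.mem_filter, Finset.mem_powersetCard] at hI ⊢
    obtain ⟨⟨hIS, hIcard⟩, hmI⟩ := hI
    refine ⟨⟨fun x hx => ?_, ?_⟩, ?_⟩
    · obtain ⟨y, hy, rfl⟩ := Finset.mem_image.1 hx
      exact sh_mem hN r' y
    · rw [Finset.card_image_of_injOn (fun x hx y hy h =>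
        sh_injOn hN hrr' x (hIS (Finset.mem_coe.1 hx)) y (hIS (Finset.mem_coe.1 hy)) h)]
      exact hIcard
    · have := Finset.mem_image_of_mem (sh N r') hmI
      rwa [sh_sh hN hrr hm] at this
  · intro I hI
    rw [Finset.mem_filter, Finset.mem_powersetCard] at hI
    exact image_image_sh hN hrr hI.1.1
  · intro I hI
    rw [Finset.mem_filter, Finset.mem_powersetCard] at hI
    exact image_image_sh hN hrr' hI.1.1
  · intro I hI
    rw [Finset.mem_filter, Finset.mem_powersetCard] at hI
    rw [prod_sh τ hbar hN hrr hrr' hI.1.1, sumg_out τ hbar hN hrr hrr' hI.1.1 hm]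

lemma Bfun_shift (τ hbar : ℂ) {N k : ℕ} (hN : 0 < N) {r r' m : ℕ}
    (hrr : (r + r') % N = 0) (hrr' : (r' + r) % N = 0) (hm : m ∈ Finset.Icc 1 N) :
    Bfun τ hbar N k (sh N r m) = Bfun τ hbar N k m := by
  unfold Bfun
  refine (Finset.sum_nbij' (fun I => I.image (sh N r)) (fun I => I.image (sh N r'))
    ?_ ?_ ?_ ?_ ?_).symm
  · intro I hI
    rw [Finset.mem_filter, Finset.mem_powersetCard] at hI ⊢
    obtain ⟨⟨hIS, hIcard⟩, hmI⟩ := hI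
    refine ⟨⟨fun x hx => ?_, ?_⟩, ?_⟩
    · obtain ⟨y, hy, rfl⟩ := Finset.mem_image.1 hx
      exact sh_mem hN r y
    · rw [Finset.card_image_of_injOn (fun x hx y hy h =>
        sh_injOn hN hrr x (hIS (Finset.mem_coe.1 hx)) y (hIS (Finset.mem_coe.1 hy)) h)]
      exact hIcard
    · rintro hmem
      obtain ⟨z, hzI, hz⟩ := Finset.mem_image.1 hmem
      exact hmI (sh_injOn hN hrr z (hIS hzI) m hm hz ▸ hzI)
  · intro I hI
    rw [Finset.mem_filter, Finset.mem_powersetCard] at hI ⊢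
    obtain ⟨⟨hIS, hIcard⟩, hmI⟩ := hI
    refine ⟨⟨fun x hx => ?_, ?_⟩, ?_⟩
    · obtain ⟨y, hy, rfl⟩ := Finset.mem_image.1 hx
      exact sh_mem hN r' y
    · rw [Finset.card_image_of_injOn (fun x hx y hy h =>
        sh_injOn hN hrr' x (hIS (Finset.mem_coe.1 hx)) y (hIS (Finset.mem_coe.1 hy)) h)]
      exact hIcard
    · rintro hmem
      obtain ⟨z, hzI, hz⟩ := Finset.mem_image.1 hmem
      have h1 : sh N r m = z := by
        rw [← hz]
        exact sh_sh hN hrr' (hIS hzI)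
      exact hmI (h1 ▸ hzI)

  · intro I hI
    rw [Finset.mem_filter, Finset.mem_powersetCard] at hI
    exact image_image_sh hN hrr hI.1.1
  · intro I hI
    rw [Finset.mem_filter, Finset.mem_powersetCard] at hI
    exact image_image_sh hN hrr' hI.1.1
  · intro I hI
    rw [Finset.mem_filter, Finset.mem_powersetCard] at hI
    rw [prod_sh τ hbar hN hrr hrr' hI.1.1, sumg_in τ hbar hN hrr hI.1.1 hm]

lemma sum_D_eq_zero (τ hbar : ℂ) (N k : ℕ) :
    ∑ m ∈ Finset.Icc 1 N, (Afun τ hbar N k m - Bfun τ hbar N k m) = 0 := by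
  rw [Finset.sum_sub_distrib]
  rw [sub_eq_zero]
  unfold Afun Bfun
  have e1 : ∑ m ∈ Finset.Icc 1 N, ∑ I ∈ ((Finset.Icc 1 N).powersetCard k).filter
        (fun I => m ∈ I),
      (∏ i ∈ I, ∏ j ∈ Finset.Icc 1 N \ I, φ₁ τ hbar ((j : ℂ)/N - (i : ℂ)/N)) *
        (∑ l ∈ Finset.Icc 1 N \ I, gfun τ hbar ((l : ℂ)/N - (m : ℂ)/N))
      = ∑ I ∈ (Finset.Icc 1 N).powersetCard k,
        (∏ i ∈ I, ∏ j ∈ Finset.Icc 1 N \ I, φ₁ τ hbar ((j : ℂ)/N - (i : ℂ)/N)) *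
          ∑ m ∈ I, ∑ l ∈ Finset.Icc 1 N \ I, gfun τ hbar ((l : ℂ)/N - (m : ℂ)/N) := by
    simp only [Finset.sum_filter]
    rw [Finset.sum_comm]
    refine Finset.sum_congr rfl fun I hI => ?_
    have hIS : I ⊆ Finset.Icc 1 N := (Finset.mem_powersetCard.1 hI).1
    rw [← Finset.sum_filter, Finset.filter_mem_eq_inter,
      Finset.inter_eq_right.2 hIS, Finset.mul_sum]
  have e2 : ∑ m ∈ Finset.Icc 1 N, ∑ I ∈ ((Finset.Icc 1 N).powersetCard k).filter
        (fun I => m ∉ I),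
      (∏ i ∈ I, ∏ j ∈ Finset.Icc 1 N \ I, φ₁ τ hbar ((j : ℂ)/N - (i : ℂ)/N)) *
        (∑ l ∈ I, gfun τ hbar ((m : ℂ)/N - (l : ℂ)/N))
      = ∑ I ∈ (Finset.Icc 1 N).powersetCard k,
        (∏ i ∈ I, ∏ j ∈ Finset.Icc 1 N \ I, φ₁ τ hbar ((j : ℂ)/N - (i : ℂ)/N)) *
          ∑ m ∈ Finset.Icc 1 N \ I, ∑ l ∈ I, gfun τ hbar ((m : ℂ)/N - (l : ℂ)/N) := by
    simp only [Finset.sum_filter]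
    rw [Finset.sum_comm]
    refine Finset.sum_congr rfl fun I hI => ?_
    rw [← Finset.sum_filter, ← Finset.sdiff_eq_filter, Finset.mul_sum]
  rw [e1, e2]
  refine Finset.sum_congr rfl fun I hI => ?_
  congr 1
  rw [Finset.sum_comm]

/-- Lemma 3 of the paper: equilibrium condition `w_m^{k} = 0` for the elliptic
Ruijsenaars–Schneider flows. -/
theorem equilibrium_condition (τ : ℂ) (hτ : 0 < τ.im) (hbar : ℂ) (N : ℕ) (hN : 0 < N)
    (k : ℕ) (hk1 : 1 ≤ k) (hkN : k ≤ N) (m : ℕ) (hm : m ∈ Finset.Icc 1 N) :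
    ∑ I ∈ ((Finset.Icc 1 N).powersetCard k).filter (fun I => m ∈ I),
      (∏ i ∈ I, ∏ j ∈ Finset.Icc 1 N \ I, φ₁ τ hbar ((j : ℂ) / N - (i : ℂ) / N)) *
        (∑ l ∈ Finset.Icc 1 N \ I, gfun τ hbar ((l : ℂ) / N - (m : ℂ) / N))
    = ∑ I ∈ ((Finset.Icc 1 N).powersetCard k).filter (fun I => m ∉ I),
        (∏ i ∈ I, ∏ j ∈ Finset.Icc 1 N \ I, φ₁ τ hbar ((j : ℂ) / N - (i : ℂ) / N)) *
          (∑ l ∈ I, gfun τ hbar ((m : ℂ) / N - (l : ℂ) / N)) := by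
  have hNc : (N : ℂ) ≠ 0 := Nat.cast_ne_zero.2 hN.ne'
  have hconst : ∀ m' ∈ Finset.Icc 1 N,
      Afun τ hbar N k m' - Bfun τ hbar N k m' = Afun τ hbar N k m - Bfun τ hbar N k m := by
    intro m' hm'
    set r := m' + N - m with hr
    have hσ : sh N r m = m' := by
      simp only [Finset.mem_Icc] at hm hm'
      have h1 : m - 1 + r = m' - 1 + N := by omega
      simp only [sh, h1, Nat.add_mod_right]
      rw [Nat.mod_eq_of_lt (by omega)]
      omega
    have hrr : (r + (m + N - m')) % N = 0 := by
      have hm2 := Finset.mem_Icc.1 hm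
      have hm2' := Finset.mem_Icc.1 hm'
      have h2 : r + (m + N - m') = 2 * N := by omega
      rw [h2]
      simp [Nat.mul_mod_right]
    have hrr' : ((m + N - m') + r) % N = 0 := by rw [Nat.add_comm]; exact hrr
    rw [← hσ, Afun_shift τ hbar hN hrr hrr' hm, Bfun_shift τ hbar hN hrr hrr' hm]
  have hcard : (Finset.Icc 1 N).card = N := by rw [Nat.card_Icc]; omega
  have hzero := sum_D_eq_zero τ hbar N k
  rw [Finset.sum_congr rfl hconst, Finset.sum_const, hcard, nsmul_eq_mul] at hzero
  have hsub : Afun τ hbar N k m - Bfun τ hbar N k m = 0 :=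
    (mul_eq_zero.1 hzero).resolve_left hNc
  have h2 : Afun τ hbar N k m = Bfun τ hbar N k m := sub_eq_zero.1 hsub
  exact h2
end

section
/- Product symmetry at equidistant points (identity (t78) of the paper, product form): assume ħ ∉ Γ = {p + qτ : p, q ∈ ℤ}. Then for every subset I ⊆ {1,…,N}, ∏_{i∈I, j∉I} φ(x_j − x_i) = ∏_{i∈I, j∉I} φ(x_i − x_j). -/
open Complex Finset

/-- Membership in the period lattice `Γ = ℤ ⊕ ℤτ`. -/
def inLattice (τ w : ℂ) : Prop := ∃ p q : ℤ, w = (p : ℂ) + (q : ℂ) * τ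

lemma phi_periodic (τ hbar : ℂ) : Function.Periodic (φ₁ τ hbar) 1 := by
  intro z
  unfold φ₁
  rw [show z + 1 + hbar = (z + hbar) + 1 by ring, theta_add_one, theta_add_one]
  rw [mul_neg, neg_mul, neg_div_neg_eq]

lemma phi_int_eq {N : ℕ} (hN : 0 < N) (τ hbar : ℂ) (m m' : ℤ)
    (h : (m : ZMod N) = (m' : ZMod N)) :
    φ₁ τ hbar ((m : ℂ) / N) = φ₁ τ hbar ((m' : ℂ) / N) := by
  rw [ZMod.intCast_eq_intCast_iff] at h
  obtain ⟨k, hk⟩ := h.dvd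
  have hNC : (N : ℂ) ≠ 0 := Nat.cast_ne_zero.mpr hN.ne'
  have hm : (m' : ℂ) = (m : ℂ) + (N : ℂ) * (k : ℂ) := by
    have : (m' : ℤ) = m + N * k := by omega
    exact_mod_cast congrArg (Int.cast : ℤ → ℂ) this
  have h2 : (m' : ℂ) / N = (m : ℂ) / N + (k : ℂ) * 1 := by
    rw [hm]; field_simp
  rw [h2]
  exact (((phi_periodic τ hbar).int_mul k) ((m : ℂ) / N)).symm

lemma cast_icc_inj {N : ℕ} (hN : 0 < N) {i j : ℕ} (hi : i ∈ Finset.Icc 1 N)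
    (hj : j ∈ Finset.Icc 1 N) (h : (i : ZMod N) = (j : ZMod N)) : i = j := by
  rw [Finset.mem_Icc] at hi hj
  have hm : i % N = j % N := (ZMod.natCast_eq_natCast_iff i j N).mp h
  rcases eq_or_lt_of_le hi.2 with h1 | h1 <;> rcases eq_or_lt_of_le hj.2 with h2 | h2
  · omega
  · rw [h1, Nat.mod_self, Nat.mod_eq_of_lt h2] at hm; omega
  · rw [h2, Nat.mod_self, Nat.mod_eq_of_lt h1] at hm; omega
  · rw [Nat.mod_eq_of_lt h1, Nat.mod_eq_of_lt h2] at hm; omega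

lemma cast_icc_surj {N : ℕ} (hN : 0 < N) (a : ZMod N) :
    ∃ j ∈ Finset.Icc 1 N, (j : ZMod N) = a := by
  haveI : NeZero N := ⟨hN.ne'⟩
  by_cases h : a = 0
  · exact ⟨N, Finset.mem_Icc.mpr ⟨hN, le_rfl⟩, by rw [h, ZMod.natCast_self]⟩
  · refine ⟨a.val, Finset.mem_Icc.mpr ⟨?_, (ZMod.val_lt a).le⟩, ?_⟩
    · have := (ZMod.val_eq_zero a).not.mpr h
      omega
    · rw [ZMod.natCast_val, ZMod.cast_id]

lemma key_card {N : ℕ} (A : Finset (ZMod N)) (d : ZMod N) :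
    (A.filter fun a => a + d ∉ A).card = (A.filter fun a => a - d ∉ A).card := by
  classical
  have h1 := Finset.card_filter_add_card_filter_not (s := A)
    (p := fun a => a + d ∈ A)
  have h2 := Finset.card_filter_add_card_filter_not (s := A)
    (p := fun a => a - d ∈ A)
  have h3 : (A.filter fun a => a + d ∈ A).card = (A.filter fun a => a - d ∈ A).card := by
    apply Finset.card_bij (fun a _ => a + d)
    · intro a ha
      rw [Finset.mem_filter] at ha ⊢
      exact ⟨ha.2, by simpa using ha.1⟩
    · intro a _ b _ hab
      exact add_right_cancel hab
    · intro b hb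
      rw [Finset.mem_filter] at hb
      exact ⟨b - d, Finset.mem_filter.mpr ⟨hb.2, by simpa using hb.1⟩, by ring⟩
  simp only [Finset.filter_not] at h1 h2 ⊢
  omega

/-- Identity (t78) of the paper: product symmetry at equidistant points. -/
theorem product_symmetry (τ : ℂ) (hτ : 0 < τ.im) (hbar : ℂ)
    (hbarΓ : ¬ inLattice τ hbar) (N : ℕ) (hN : 0 < N)
    (I : Finset ℕ) (hI : I ⊆ Finset.Icc 1 N) :
    ∏ i ∈ I, ∏ j ∈ Finset.Icc 1 N \ I, φ₁ τ hbar ((j : ℂ) / N - (i : ℂ) / N)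
    = ∏ i ∈ I, ∏ j ∈ Finset.Icc 1 N \ I, φ₁ τ hbar ((i : ℂ) / N - (j : ℂ) / N) := by
  classical
  haveI : NeZero N := ⟨hN.ne'⟩
  set S : Finset (ℕ × ℕ) := I ×ˢ (Finset.Icc 1 N \ I) with hS
  set A : Finset (ZMod N) := I.image (fun n : ℕ => (n : ZMod N)) with hA
  set f : ℕ × ℕ → ZMod N := fun p => (p.2 : ZMod N) - (p.1 : ZMod N) with hf
  set g : ZMod N → ℂ := fun d => φ₁ τ hbar ((d.val : ℂ) / N) with hg
  -- each factor only depends on the residue of j - i mod N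
  have hfac : ∀ i j : ℕ, φ₁ τ hbar ((j : ℂ) / N - (i : ℂ) / N)
      = g ((j : ZMod N) - (i : ZMod N)) := by
    intro i j
    have h1 : (j : ℂ) / N - (i : ℂ) / N = (((j : ℤ) - (i : ℤ) : ℤ) : ℂ) / N := by
      push_cast; ring
    have hcast : ((((j : ZMod N) - (i : ZMod N)).val : ℤ) : ZMod N)
        = (((j : ℤ) - (i : ℤ) : ℤ) : ZMod N) := by
      push_cast [ZMod.natCast_val, ZMod.cast_id]; rfl
    have h2 := phi_int_eq hN τ hbar ((j : ℤ) - (i : ℤ))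
      ((((j : ZMod N) - (i : ZMod N)).val : ℤ)) hcast.symm
    rw [h1, h2, hg]
    push_cast
    rfl
  -- rewrite both sides as products over S
  have hL : ∏ i ∈ I, ∏ j ∈ Finset.Icc 1 N \ I, φ₁ τ hbar ((j : ℂ) / N - (i : ℂ) / N)
      = ∏ p ∈ S, g (f p) := by
    rw [hS, Finset.prod_product]
    exact Finset.prod_congr rfl fun i _ => Finset.prod_congr rfl fun j _ => hfac i j
  have hR : ∏ i ∈ I, ∏ j ∈ Finset.Icc 1 N \ I, φ₁ τ hbar ((i : ℂ) / N - (j : ℂ) / N)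
      = ∏ p ∈ S, g (-(f p)) := by
    rw [hS, Finset.prod_product]
    refine Finset.prod_congr rfl fun i _ => Finset.prod_congr rfl fun j _ => ?_
    rw [hfac j i]
    congr 1
    simp [hf]
  rw [hL, hR]
  -- fiberwise decomposition
  have hmaps : ∀ p ∈ S, f p ∈ (Finset.univ : Finset (ZMod N)) := fun p _ => Finset.mem_univ _
  have hfib1 : ∏ p ∈ S, g (f p)
      = ∏ d : ZMod N, g d ^ (S.filter fun p => f p = d).card := by
    rw [← Finset.prod_fiberwise_of_maps_to' hmaps g]
    exact Finset.prod_congr rfl fun d _ => (Finset.prod_const _)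
  have hfib2 : ∏ p ∈ S, g (-(f p))
      = ∏ d : ZMod N, g (-d) ^ (S.filter fun p => f p = d).card := by
    rw [← Finset.prod_fiberwise_of_maps_to' hmaps (fun d => g (-d))]
    exact Finset.prod_congr rfl fun d _ => (Finset.prod_const _)
  rw [hfib1, hfib2]
  -- reindex the right product by negation
  have hneg : ∏ d : ZMod N, g (-d) ^ (S.filter fun p => f p = d).card
      = ∏ d : ZMod N, g d ^ (S.filter fun p => f p = -d).card := by
    exact Fintype.prod_equiv (Equiv.neg (ZMod N))
      (fun d => g (-d) ^ (S.filter fun p => f p = d).card)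
      (fun d => g d ^ (S.filter fun p => f p = -d).card)
      (fun d => by simp)
  rw [hneg]
  -- it remains to match the fiber cardinalities
  refine Finset.prod_congr rfl fun d _ => ?_
  congr 1
  -- fiber cardinality in terms of A
  have hc : ∀ e : ZMod N, (S.filter fun p => f p = e).card
      = (A.filter fun a => a + e ∉ A).card := by
    intro e
    apply Finset.card_bij (fun p _ => ((p.1 : ZMod N)))
    · intro p hp
      rw [Finset.mem_filter, hS, Finset.mem_product, Finset.mem_sdiff] at hp
      obtain ⟨⟨hp1, hp2, hp2'⟩, hpe⟩ := hp
      rw [Finset.mem_filter]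
      constructor
      · exact Finset.mem_image.mpr ⟨p.1, hp1, rfl⟩
      · intro hmem
        obtain ⟨i', hi', hi'e⟩ := Finset.mem_image.mp hmem
        have h2 : (p.1 : ZMod N) + e = (p.2 : ZMod N) := by
          rw [← hpe, hf]; ring
        have : i' = p.2 := cast_icc_inj hN (hI hi') hp2 (by rw [hi'e, h2])
        exact hp2' (this ▸ hi')
    · intro p hp q hq hpq
      rw [Finset.mem_filter, hS, Finset.mem_product, Finset.mem_sdiff] at hp hq
      have h1 : p.1 = q.1 := cast_icc_inj hN (hI hp.1.1) (hI hq.1.1) hpq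
      have h2 : p.2 = q.2 := by
        apply cast_icc_inj hN hp.1.2.1 hq.1.2.1
        have e1 : (p.2 : ZMod N) = (p.1 : ZMod N) + e := by rw [← hp.2, hf]; ring
        have e2 : (q.2 : ZMod N) = (q.1 : ZMod N) + e := by rw [← hq.2, hf]; ring
        rw [e1, e2, hpq]
      exact Prod.ext h1 h2
    · intro a ha
      rw [Finset.mem_filter] at ha
      obtain ⟨i, hiI, hie⟩ := Finset.mem_image.mp ha.1
      obtain ⟨j, hjIcc, hje⟩ := cast_icc_surj hN (a + e)
      have hjI : j ∉ I := by
        intro hjmem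
        exact ha.2 (Finset.mem_image.mpr ⟨j, hjmem, hje⟩)
      refine ⟨(i, j), ?_, hie⟩
      rw [Finset.mem_filter, hS, Finset.mem_product, Finset.mem_sdiff]
      refine ⟨⟨hiI, hjIcc, hjI⟩, ?_⟩
      rw [hf]
      show (j : ZMod N) - (i : ZMod N) = e
      rw [hje, hie]; ring
  rw [hc d, hc (-d)]
  have : (A.filter fun a => a + -d ∉ A) = (A.filter fun a => a - d ∉ A) := by
    apply Finset.filter_congr
    intro a _
    rw [sub_eq_add_neg]
  rw [this]
  exact key_card A d
end

section
/- Trigonometric degeneration of the Kronecker function (formula (a081) of the paper): fix z, u ∈ ℂ with z ∉ ℤ and u ∉ ℤ. Then, as τ ranges over the upper half-plane with Im τ → +∞, the value φ_τ(z, u) tends to π·cot(πz) + π·cot(πu); formally, the function τ ↦ φ_τ(z,u) tends to π·cot(πz) + π·cot(πu) along the filter comap(Im)(atTop) on ℂ. -/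
open Complex Filter Topology

/-- The two-variable Kronecker elliptic function `φ_τ(z,u)`. -/
noncomputable def φ₂ (τ : ℂ) (z u : ℂ) : ℂ :=
  deriv (ϑ τ) 0 * ϑ τ (z + u) / (ϑ τ z * ϑ τ u)

section aux

local notation "π" => Real.pi

lemma theta_eq (τ z : ℂ) :
    ϑ τ z = -(Complex.exp (π * I * τ / 4 + π * I / 2) *
      (Complex.exp (π * I * z) * jacobiTheta₂ (z + (1 + τ) / 2) τ)) := by
  have h : ∀ k : ℤ, Complex.exp (π * Complex.I * τ * ((k : ℂ) + 1 / 2) ^ 2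
      + 2 * π * Complex.I * (z + 1 / 2) * ((k : ℂ) + 1 / 2))
      = Complex.exp (π * I * τ / 4 + π * I / 2) * Complex.exp (π * I * z) *
        jacobiTheta₂_term k (z + (1 + τ) / 2) τ := by
    intro k
    rw [jacobiTheta₂_term, ← Complex.exp_add, ← Complex.exp_add]
    congr 1
    push_cast
    ring
  rw [ϑ, jacobiTheta₂, tsum_congr h, tsum_mul_left]
  ring

lemma theta_hasDerivAt {τ : ℂ} (hτ : 0 < τ.im) :
    HasDerivAt (ϑ τ) (-(Complex.exp (π * I * τ / 4 + π * I / 2) *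
      ((π : ℂ) * I * jacobiTheta₂ ((1 + τ) / 2) τ + jacobiTheta₂' ((1 + τ) / 2) τ))) 0 := by
  have h1 : HasDerivAt (fun z : ℂ => jacobiTheta₂ (z + (1 + τ) / 2) τ)
      (jacobiTheta₂' ((1 + τ) / 2) τ) 0 := by
    have hpt : HasDerivAt (fun x => jacobiTheta₂ x τ) (jacobiTheta₂' ((1 + τ) / 2) τ)
        (id (0 : ℂ) + (1 + τ) / 2) := by
      simpa using hasDerivAt_jacobiTheta₂_fst ((1 + τ) / 2) hτ
    have := HasDerivAt.comp 0 hpt ((hasDerivAt_id (0 : ℂ)).add_const ((1 + τ) / 2))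
    simp only [mul_one, id] at this
    exact this
  have h2 : HasDerivAt (fun z : ℂ => Complex.exp ((π : ℂ) * I * z)) ((π : ℂ) * I) 0 := by
    simpa using (((hasDerivAt_id (0 : ℂ)).const_mul ((π : ℂ) * I)).cexp)
  have h3 := ((h2.mul h1).const_mul (Complex.exp (π * I * τ / 4 + π * I / 2))).neg
  have hfun : ϑ τ = fun z => -(Complex.exp (π * I * τ / 4 + π * I / 2) *
      (Complex.exp (π * I * z) * jacobiTheta₂ (z + (1 + τ) / 2) τ)) := funext (theta_eq τ)
  rw [hfun]
  refine h3.congr_deriv ?_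
  simp only [Complex.exp_zero, mul_one, zero_add, mul_zero, one_mul]

lemma bound_summable (S : ℝ) :
    Summable (fun n : ℤ => 2 * π * (|n| + 1) *
      Real.exp (2 * π * S * |n| - π * ((n : ℝ) ^ 2 + n))) := by
  have h := (((summable_pow_mul_jacobiTheta₂_term_bound (S + 1/2) one_pos 1).add
    (summable_pow_mul_jacobiTheta₂_term_bound (S + 1/2) one_pos 0))).mul_left (2 * π)
  refine h.of_nonneg_of_le (fun n => by positivity) (fun n => ?_)
  have hle : Real.exp (2 * π * S * |n| - π * ((n : ℝ) ^ 2 + n)) ≤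
      Real.exp (-π * (1 * (n : ℝ) ^ 2 - 2 * (S + 1/2) * |(n : ℝ)|)) := by
    rw [Real.exp_le_exp]
    have h1 : -(n : ℝ) ≤ |(n : ℝ)| := neg_le_abs _
    have h2 : ((|n| : ℤ) : ℝ) = |(n : ℝ)| := by push_cast; ring
    rw [h2]
    nlinarith [Real.pi_pos, abs_nonneg ((n : ℝ))]
  calc 2 * π * (|n| + 1) * Real.exp (2 * π * S * |n| - π * ((n : ℝ) ^ 2 + n))
      ≤ 2 * π * (|n| + 1) * Real.exp (-π * (1 * (n : ℝ) ^ 2 - 2 * (S + 1/2) * |(n : ℝ)|)) := by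
        have : (0 : ℝ) ≤ 2 * π * (|n| + 1) := by positivity
        exact mul_le_mul_of_nonneg_left hle this
    _ = 2 * π * ((|n| ^ 1 : ℝ) * Real.exp (-π * (1 * (n : ℝ) ^ 2 - 2 * (S + 1/2) * |n|)) +
        (|n| ^ 0 : ℝ) * Real.exp (-π * (1 * (n : ℝ) ^ 2 - 2 * (S + 1/2) * |n|))) := by
        push_cast; ring

lemma tendsto_exp_int (m : ℤ) (hm : 0 < m) :
    Tendsto (fun τ : ℂ => Complex.exp ((π : ℂ) * I * (m : ℂ) * τ))
      (Filter.comap Complex.im Filter.atTop) (𝓝 0) := by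
  rw [tendsto_zero_iff_norm_tendsto_zero]
  have hnorm : ∀ τ : ℂ, ‖Complex.exp ((π : ℂ) * I * (m : ℂ) * τ)‖
      = Real.exp (-(π * m) * τ.im) := by
    intro τ
    rw [Complex.norm_exp]
    congr 1
    simp [Complex.mul_re, Complex.mul_im]
  simp_rw [hnorm]
  apply Real.tendsto_exp_atBot.comp
  have him : Tendsto (fun τ : ℂ => τ.im) (Filter.comap Complex.im Filter.atTop) atTop :=
    tendsto_comap
  have hneg : (0 : ℝ) < π * m := by positivity
  exact him.const_mul_atTop_of_neg (by linarith)

lemma tendsto_aux (w : ℂ) (c : ℤ → ℂ) (hc : ∀ n : ℤ, ‖c n‖ ≤ 2 * π * (|n| + 1)) :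
    Tendsto (fun τ : ℂ => ∑' n : ℤ, c n * jacobiTheta₂_term n (w + (1 + τ) / 2) τ)
      (Filter.comap Complex.im Filter.atTop)
      (𝓝 (c 0 - c (-1) * Complex.exp (-(2 * π * I * w)))) := by
  set l := Filter.comap Complex.im Filter.atTop with hl
  have hterm : ∀ (n : ℤ) (τ : ℂ), jacobiTheta₂_term n (w + (1 + τ) / 2) τ =
      Complex.exp (2 * π * I * n * (w + 1 / 2)) *
        Complex.exp ((π : ℂ) * I * ((n : ℂ) ^ 2 + n) * τ) := by
    intro n τ
    rw [jacobiTheta₂_term, ← Complex.exp_add]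
    congr 1
    ring
  set g : ℤ → ℂ := fun n => if n = 0 then c 0 else
    if n = -1 then -(c (-1) * Complex.exp (-(2 * π * I * w))) else 0 with hg
  have hgsum : ∑' n : ℤ, g n = c 0 - c (-1) * Complex.exp (-(2 * π * I * w)) := by
    rw [tsum_eq_sum (s := ({0, -1} : Finset ℤ)) (fun n hn => by
      simp only [Finset.mem_insert, Finset.mem_singleton, not_or] at hn
      simp [hg, hn.1, hn.2])]
    rw [Finset.sum_pair (by decide : (0 : ℤ) ≠ -1)]
    simp [hg]
    ring
  have hexpneg : Complex.exp (-((π : ℂ) * I)) = -1 := by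
    rw [Complex.exp_neg, Complex.exp_pi_mul_I]
    norm_num
  have hab : ∀ n : ℤ, Tendsto (fun τ : ℂ => c n * jacobiTheta₂_term n (w + (1 + τ) / 2) τ)
      l (𝓝 (g n)) := by
    intro n
    rcases eq_or_ne n 0 with rfl | hn0
    · simp_rw [hterm]
      simpa [hg] using tendsto_const_nhds (α := ℂ) (f := l)
    rcases eq_or_ne n (-1) with rfl | hn1
    · simp_rw [hterm]
      have hval : ∀ τ : ℂ, c (-1) * (Complex.exp (2 * π * I * ((-1 : ℤ) : ℂ) * (w + 1 / 2)) *
          Complex.exp ((π : ℂ) * I * (((-1 : ℤ) : ℂ) ^ 2 + ((-1 : ℤ) : ℂ)) * τ)) = g (-1) := by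
        intro τ
        have h0 : (((-1 : ℤ) : ℂ) ^ 2 + ((-1 : ℤ) : ℂ)) = 0 := by push_cast; ring
        rw [h0, mul_zero, zero_mul, Complex.exp_zero, mul_one]
        have h1 : (2 * (π : ℂ) * I * ((-1 : ℤ) : ℂ) * (w + 1 / 2))
            = -(2 * π * I * w) + -((π : ℂ) * I) := by push_cast; ring
        rw [h1, Complex.exp_add, hexpneg]
        simp [hg]
      exact Tendsto.congr (fun τ => (hval τ).symm) tendsto_const_nhds
    · have hm : 0 < n ^ 2 + n := by
        have : 1 ≤ n ∨ n ≤ -2 := by omega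
        rcases this with h | h <;> nlinarith
      have h0 := (tendsto_exp_int (n ^ 2 + n) hm).const_mul
        (c n * Complex.exp (2 * π * I * n * (w + 1 / 2)))
      have : g n = 0 := by simp [hg, hn0, hn1]
      rw [this]
      simp_rw [hterm]
      simp only [mul_zero] at h0
      refine h0.congr fun τ => ?_
      push_cast
      ring
  have hbound : ∀ᶠ τ : ℂ in l, ∀ n : ℤ,
      ‖c n * jacobiTheta₂_term n (w + (1 + τ) / 2) τ‖ ≤
        2 * π * (|n| + 1) * Real.exp (2 * π * |w.im| * |n| - π * ((n : ℝ) ^ 2 + n)) := by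
    have h1 : ∀ᶠ τ : ℂ in l, (1 : ℝ) ≤ τ.im :=
      (tendsto_comap (f := Complex.im)).eventually (eventually_ge_atTop 1)
    filter_upwards [h1] with τ hτ n
    rw [norm_mul, norm_jacobiTheta₂_term]
    have him : (w + (1 + τ) / 2).im = w.im + τ.im / 2 := by
      simp [Complex.add_im, Complex.div_im]
    rw [him]
    have hexp : Real.exp (-π * (n : ℝ) ^ 2 * τ.im - 2 * π * n * (w.im + τ.im / 2)) ≤
        Real.exp (2 * π * |w.im| * |n| - π * ((n : ℝ) ^ 2 + n)) := by
      rw [Real.exp_le_exp]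
      have hnn : (0 : ℝ) ≤ (n : ℝ) ^ 2 + n := by
        have : (0 : ℤ) ≤ n ^ 2 + n := by nlinarith [sq_nonneg n, sq_nonneg (n + 1)]
        exact_mod_cast this
      have habs : -((n : ℝ) * w.im) ≤ |(n : ℝ)| * |w.im| := by
        rw [← abs_mul]
        exact neg_le_abs _
      have hcast : ((|n| : ℤ) : ℝ) = |(n : ℝ)| := by push_cast; ring
      rw [hcast]
      nlinarith [Real.pi_pos, mul_le_mul_of_nonneg_left hτ hnn]
    exact mul_le_mul (hc n) hexp (Real.exp_nonneg _) (by positivity)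
  rw [← hgsum]
  exact tendsto_tsum_of_dominated_convergence (bound_summable |w.im|) hab hbound

lemma tendsto_Θ (w : ℂ) :
    Tendsto (fun τ : ℂ => jacobiTheta₂ (w + (1 + τ) / 2) τ)
      (Filter.comap Complex.im Filter.atTop)
      (𝓝 (1 - Complex.exp (-(2 * π * I * w)))) := by
  have h := tendsto_aux w (fun _ => 1) (fun n => by
    have h3 := Real.pi_gt_three
    have h0 : (0 : ℝ) ≤ ((|n| : ℤ) : ℝ) := by positivity
    simp only [norm_one]
    nlinarith)
  simp only [one_mul] at h
  exact h

lemma tendsto_Θ' :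
    Tendsto (fun τ : ℂ => jacobiTheta₂' ((1 + τ) / 2) τ)
      (Filter.comap Complex.im Filter.atTop) (𝓝 (2 * π * I)) := by
  have h := tendsto_aux 0 (fun n => 2 * (π : ℂ) * I * n) (fun n => by
    have h3 := Real.pi_pos
    have h0 : (0 : ℝ) ≤ ((|n| : ℤ) : ℝ) := by positivity
    have : ‖2 * (π : ℂ) * I * (n : ℂ)‖ = 2 * π * |(n : ℝ)| := by
      simp [norm_mul, Complex.norm_real, Real.norm_eq_abs, abs_of_pos Real.pi_pos]
    rw [this]
    push_cast
    nlinarith)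
  simp only [zero_add, Int.cast_zero, mul_zero, Int.cast_neg, Int.cast_one, mul_neg, mul_one,
    neg_zero, Complex.exp_zero, zero_sub, neg_neg] at h
  exact h

lemma exp_ne_one (v : ℂ) (hv : ∀ n : ℤ, v ≠ n) :
    Complex.exp (-(2 * π * I * v)) ≠ 1 := by
  intro h
  rw [Complex.exp_eq_one_iff] at h
  obtain ⟨n, hn⟩ := h
  apply hv (-n)
  have h2 : ((2 : ℂ) * π * I) ≠ 0 := by
    simp [Real.pi_ne_zero, Complex.I_ne_zero, Complex.ofReal_ne_zero]
  have h3 : (-v) * (2 * (π : ℂ) * I) = (n : ℂ) * (2 * (π : ℂ) * I) := by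
    linear_combination hn
  have h4 := mul_right_cancel₀ h2 h3
  push_cast
  linear_combination -h4

lemma cot_eq (v : ℂ) (hv : ∀ n : ℤ, v ≠ n) :
    (π : ℂ) * Complex.cot ((π : ℂ) * v) =
      (π : ℂ) * I * (1 + Complex.exp (-(2 * π * I * v))) /
        (1 - Complex.exp (-(2 * π * I * v))) := by
  have hπ : ((π : ℝ) : ℂ) ≠ 0 := Complex.ofReal_ne_zero.mpr Real.pi_ne_zero
  have hsin : Complex.sin ((π : ℂ) * v) ≠ 0 := by
    rw [Complex.sin_ne_zero_iff]
    intro k hk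
    apply hv k
    have : (π : ℂ) * v = (π : ℂ) * k := by rw [hk]; ring
    exact mul_left_cancel₀ hπ this
  have hden : 1 - Complex.exp (-(2 * π * I * v)) ≠ 0 :=
    sub_ne_zero.mpr (Ne.symm (exp_ne_one v hv))
  have hB2 : Complex.exp (-(2 * (π : ℂ) * I * v)) = Complex.exp (-((π : ℂ) * v) * I) ^ 2 := by
    rw [sq, ← Complex.exp_add]; congr 1; ring
  have hAB : Complex.exp ((π : ℂ) * v * I) * Complex.exp (-((π : ℂ) * v) * I) = 1 := by
    rw [← Complex.exp_add, show ((π : ℂ) * v * I + -((π : ℂ) * v) * I) = 0 by ring,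
      Complex.exp_zero]
  rw [hB2] at hden ⊢
  rw [Complex.cot_eq_cos_div_sin, Complex.cos, Complex.sin]
  set A := Complex.exp ((π : ℂ) * v * I) with hA
  set B := Complex.exp (-((π : ℂ) * v) * I) with hB
  have hsin2 : (B - A) * I / 2 ≠ 0 := by rw [hA, hB, ← Complex.sin]; exact hsin
  have hBA : B - A ≠ 0 := by
    intro h
    exact hsin2 (by rw [h, zero_mul, zero_div])
  field_simp
  linear_combination (-(1 + B ^ 2) * (B - A)) * Complex.I_sq +
    (-2 * B) * hAB

end aux

/-- Trigonometric degeneration of the Kronecker function (formula (a081) of the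
paper): as `Im τ → +∞`, `φ_τ(z,u) → π·cot(πz) + π·cot(πu)`. -/
theorem kronecker_trig_limit (z u : ℂ)
    (hz : ∀ n : ℤ, z ≠ (n : ℂ)) (hu : ∀ n : ℤ, u ≠ (n : ℂ)) :
    Tendsto (fun τ : ℂ => φ₂ τ z u) (Filter.comap Complex.im Filter.atTop)
      (nhds (Real.pi * Complex.cot (Real.pi * z) + Real.pi * Complex.cot (Real.pi * u))) := by
  have ha' : 1 - Complex.exp (-(2 * Real.pi * I * z)) ≠ 0 :=
    sub_ne_zero.mpr (Ne.symm (exp_ne_one z hz))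
  have hb' : 1 - Complex.exp (-(2 * Real.pi * I * u)) ≠ 0 :=
    sub_ne_zero.mpr (Ne.symm (exp_ne_one u hu))
  have hEq : ∀ᶠ τ : ℂ in Filter.comap Complex.im Filter.atTop, φ₂ τ z u =
      (((Real.pi : ℂ) * I * jacobiTheta₂ ((1 + τ) / 2) τ + jacobiTheta₂' ((1 + τ) / 2) τ) *
        jacobiTheta₂ ((z + u) + (1 + τ) / 2) τ) /
      (jacobiTheta₂ (z + (1 + τ) / 2) τ * jacobiTheta₂ (u + (1 + τ) / 2) τ) := by
    filter_upwards [(tendsto_comap (f := Complex.im)).eventually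
      (eventually_gt_atTop (0 : ℝ))] with τ hτ
    rw [φ₂, (theta_hasDerivAt hτ).deriv, theta_eq τ (z + u), theta_eq τ z, theta_eq τ u]
    set C := Complex.exp (Real.pi * I * τ / 4 + Real.pi * I / 2) with hC
    set Ez := Complex.exp ((Real.pi : ℂ) * I * z) with hEz
    set Eu := Complex.exp ((Real.pi : ℂ) * I * u) with hEu
    set A := (Real.pi : ℂ) * I * jacobiTheta₂ ((1 + τ) / 2) τ + jacobiTheta₂' ((1 + τ) / 2) τ
      with hA
    set Tzu := jacobiTheta₂ ((z + u) + (1 + τ) / 2) τ with hTzu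
    set Tz := jacobiTheta₂ (z + (1 + τ) / 2) τ with hTz
    set Tu := jacobiTheta₂ (u + (1 + τ) / 2) τ with hTu
    have hsplit : Complex.exp ((Real.pi : ℂ) * I * (z + u)) = Ez * Eu := by
      rw [hEz, hEu, ← Complex.exp_add]; congr 1; ring
    rw [hsplit]
    have hk : C * C * Ez * Eu ≠ 0 := by
      rw [hC, hEz, hEu]
      exact mul_ne_zero (mul_ne_zero (mul_ne_zero (Complex.exp_ne_zero _)
        (Complex.exp_ne_zero _)) (Complex.exp_ne_zero _)) (Complex.exp_ne_zero _)
    calc -(C * A) * -(C * (Ez * Eu * Tzu)) / (-(C * (Ez * Tz)) * -(C * (Eu * Tu)))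
        = (C * C * Ez * Eu) * (A * Tzu) / ((C * C * Ez * Eu) * (Tz * Tu)) := by ring_nf
      _ = A * Tzu / (Tz * Tu) := mul_div_mul_left _ _ hk
  have h0 : Tendsto (fun τ : ℂ => jacobiTheta₂ ((1 + τ) / 2) τ)
      (Filter.comap Complex.im Filter.atTop) (𝓝 0) := by
    have := tendsto_Θ 0
    simpa using this
  have hnum : Tendsto (fun τ : ℂ =>
      ((Real.pi : ℂ) * I * jacobiTheta₂ ((1 + τ) / 2) τ + jacobiTheta₂' ((1 + τ) / 2) τ) *
        jacobiTheta₂ ((z + u) + (1 + τ) / 2) τ)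
      (Filter.comap Complex.im Filter.atTop)
      (𝓝 (2 * Real.pi * I * (1 - Complex.exp (-(2 * Real.pi * I * (z + u)))))) := by
    have := ((h0.const_mul ((Real.pi : ℂ) * I)).add tendsto_Θ').mul (tendsto_Θ (z + u))
    simpa using this
  have hden : Tendsto (fun τ : ℂ =>
      jacobiTheta₂ (z + (1 + τ) / 2) τ * jacobiTheta₂ (u + (1 + τ) / 2) τ)
      (Filter.comap Complex.im Filter.atTop)
      (𝓝 ((1 - Complex.exp (-(2 * Real.pi * I * z))) *
        (1 - Complex.exp (-(2 * Real.pi * I * u))))) :=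
    (tendsto_Θ z).mul (tendsto_Θ u)
  have hlim := hnum.div hden (mul_ne_zero ha' hb')
  have hfinal : 2 * (Real.pi : ℂ) * I * (1 - Complex.exp (-(2 * Real.pi * I * (z + u)))) /
      ((1 - Complex.exp (-(2 * Real.pi * I * z))) * (1 - Complex.exp (-(2 * Real.pi * I * u))))
      = Real.pi * Complex.cot (Real.pi * z) + Real.pi * Complex.cot (Real.pi * u) := by
    rw [cot_eq z hz, cot_eq u hu,
      show Complex.exp (-(2 * (Real.pi : ℂ) * I * (z + u))) =
        Complex.exp (-(2 * Real.pi * I * z)) * Complex.exp (-(2 * Real.pi * I * u)) from by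
          rw [← Complex.exp_add]; congr 1; ring]
    field_simp
    ring
  rw [← hfinal]
  exact Tendsto.congr' (Filter.EventuallyEq.symm hEq) hlim
end

section
/- Derivative identity for the trigonometric 6-vertex R-matrix (identities (q36)–(q360) of the paper): let s, u ∈ ℂ, t = s², with u ≠ 0, u·t ≠ 1 and t ≠ u. Let D(u) be the 4×4 matrix whose (a,b) entry is the complex derivative at u of the (a,b) entry of the matrix-valued function v ↦ R̄₂₁(v) = P·R̄(v)·P. Then R̄(u⁻¹) · (u · D(u)) = ((1−t)u/((t−u)(tu−1))) · C, where C is the 4×4 matrix [[0,0,0,0],[0, 1, −s, 0],[0, −s, s², 0],[0,0,0,0]]. -/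
open Matrix

/-- The normalized trigonometric 6-vertex (XXZ) R-matrix `R̄(u)` with `t = s²`,
in the ordered basis `(e₁⊗e₁, e₁⊗e₂, e₂⊗e₁, e₂⊗e₂)`. -/
noncomputable def Rbar (s u : ℂ) : Matrix (Fin 4) (Fin 4) ℂ :=
  !![1, 0, 0, 0;
     0, s * (u - 1) / (u * s ^ 2 - 1), u * (s ^ 2 - 1) / (u * s ^ 2 - 1), 0;
     0, (s ^ 2 - 1) / (u * s ^ 2 - 1), s * (u - 1) / (u * s ^ 2 - 1), 0;
     0, 0, 0, 1]

/-- The tensor flip: the permutation matrix exchanging the second and third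
basis vectors. -/
def Pm : Matrix (Fin 4) (Fin 4) ℂ :=
  !![1, 0, 0, 0;
     0, 0, 1, 0;
     0, 1, 0, 0;
     0, 0, 0, 1]

lemma conj_Rbar (s v : ℂ) : Pm * Rbar s v * Pm =
    !![1, 0, 0, 0;
       0, s * (v - 1) / (v * s ^ 2 - 1), (s ^ 2 - 1) / (v * s ^ 2 - 1), 0;
       0, v * (s ^ 2 - 1) / (v * s ^ 2 - 1), s * (v - 1) / (v * s ^ 2 - 1), 0;
       0, 0, 0, 1] := by
  ext a b
  fin_cases a <;> fin_cases b <;>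
    simp [Pm, Rbar, Matrix.mul_apply, Fin.sum_univ_four, Matrix.vecHead, Matrix.vecTail]

lemma deriv_a (s u : ℂ) (h1 : u * s ^ 2 ≠ 1) :
    deriv (fun v : ℂ => s * (v - 1) / (v * s ^ 2 - 1)) u
      = s * (s ^ 2 - 1) / (u * s ^ 2 - 1) ^ 2 := by
  have hd : u * s ^ 2 - 1 ≠ 0 := sub_ne_zero.mpr h1
  have h : HasDerivAt (fun v : ℂ => s * (v - 1) / (v * s ^ 2 - 1))
      ((s * 1 * (u * s ^ 2 - 1) - s * (u - 1) * (1 * s ^ 2)) / (u * s ^ 2 - 1) ^ 2) u := by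
    exact (HasDerivAt.div (((hasDerivAt_id u).sub_const 1).const_mul s)
      (((hasDerivAt_id u).mul_const (s ^ 2)).sub_const 1) hd).congr_deriv (by simp only [id])
  rw [h.deriv]; field_simp; ring

lemma deriv_b (s u : ℂ) (h1 : u * s ^ 2 ≠ 1) :
    deriv (fun v : ℂ => (s ^ 2 - 1) / (v * s ^ 2 - 1)) u
      = -((s ^ 2 - 1) * s ^ 2) / (u * s ^ 2 - 1) ^ 2 := by
  have hd : u * s ^ 2 - 1 ≠ 0 := sub_ne_zero.mpr h1
  have h : HasDerivAt (fun v : ℂ => (s ^ 2 - 1) / (v * s ^ 2 - 1))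
      ((0 * (u * s ^ 2 - 1) - (s ^ 2 - 1) * (1 * s ^ 2)) / (u * s ^ 2 - 1) ^ 2) u := by
    exact (HasDerivAt.div (hasDerivAt_const u (s ^ 2 - 1))
      (((hasDerivAt_id u).mul_const (s ^ 2)).sub_const 1) hd).congr_deriv (by simp only [id])
  rw [h.deriv]; field_simp; ring

lemma deriv_c (s u : ℂ) (h1 : u * s ^ 2 ≠ 1) :
    deriv (fun v : ℂ => v * (s ^ 2 - 1) / (v * s ^ 2 - 1)) u
      = -(s ^ 2 - 1) / (u * s ^ 2 - 1) ^ 2 := by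
  have hd : u * s ^ 2 - 1 ≠ 0 := sub_ne_zero.mpr h1
  have h : HasDerivAt (fun v : ℂ => v * (s ^ 2 - 1) / (v * s ^ 2 - 1))
      ((1 * (s ^ 2 - 1) * (u * s ^ 2 - 1) - u * (s ^ 2 - 1) * (1 * s ^ 2)) / (u * s ^ 2 - 1) ^ 2) u := by
    exact (HasDerivAt.div ((hasDerivAt_id u).mul_const (s ^ 2 - 1))
      (((hasDerivAt_id u).mul_const (s ^ 2)).sub_const 1) hd).congr_deriv (by simp only [id])
  rw [h.deriv]; field_simp; ring

set_option maxHeartbeats 1000000 in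
/-- Identities (q36)–(q360) of the paper: with `D(u)` the entrywise derivative
at `u` of `v ↦ R̄₂₁(v) = P·R̄(v)·P`, one has
`R̄(u⁻¹)·(u·D(u)) = ((1−t)u/((t−u)(tu−1)))·C`, `t = s²`. -/
theorem sixvertex_derivative_identity (s u : ℂ) (hu : u ≠ 0)
    (h1 : u * s ^ 2 ≠ 1) (h2 : s ^ 2 ≠ u) :
    Rbar s u⁻¹ *
        (u • Matrix.of (fun a b : Fin 4 => deriv (fun v => (Pm * Rbar s v * Pm) a b) u))
      = ((1 - s ^ 2) * u / ((s ^ 2 - u) * (s ^ 2 * u - 1))) •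
          (!![0, 0, 0, 0;
              0, 1, -s, 0;
              0, -s, s ^ 2, 0;
              0, 0, 0, 0] : Matrix (Fin 4) (Fin 4) ℂ) := by
  have hD : Matrix.of (fun a b : Fin 4 => deriv (fun v => (Pm * Rbar s v * Pm) a b) u)
      = !![0, 0, 0, 0;
           0, s * (s ^ 2 - 1) / (u * s ^ 2 - 1) ^ 2, -((s ^ 2 - 1) * s ^ 2) / (u * s ^ 2 - 1) ^ 2, 0;
           0, -(s ^ 2 - 1) / (u * s ^ 2 - 1) ^ 2, s * (s ^ 2 - 1) / (u * s ^ 2 - 1) ^ 2, 0;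
           0, 0, 0, 0] := by
    ext a b
    fin_cases a <;> fin_cases b <;>
      simp only [Matrix.of_apply, conj_Rbar, Fin.isValue, Fin.zero_eta, Fin.mk_one,
        Matrix.cons_val', Matrix.cons_val_zero, Matrix.cons_val_one, Matrix.head_cons,
        Matrix.empty_val', Matrix.cons_val_fin_one, Matrix.head_fin_const,
        Matrix.cons_val_two, Matrix.tail_cons, Matrix.cons_val_three] <;>
      first
        | exact deriv_const u _
        | exact deriv_a s u h1
        | exact deriv_b s u h1
        | exact deriv_c s u h1
  rw [hD]
  have hd : u * s ^ 2 - 1 ≠ 0 := sub_ne_zero.mpr h1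
  have hsu : s ^ 2 - u ≠ 0 := sub_ne_zero.mpr h2
  have hd2 : s ^ 2 * u - 1 ≠ 0 := by rwa [mul_comm] at hd
  have hinv : u⁻¹ * s ^ 2 - 1 ≠ 0 := by
    intro h
    apply hsu
    have := congrArg (· * u) h
    field_simp at this
    linear_combination this
  ext a b
  fin_cases a <;> fin_cases b <;>
    simp [Rbar, Matrix.mul_apply, Fin.sum_univ_four, Matrix.smul_apply,
      Matrix.vecHead, Matrix.vecTail] <;>
    (field_simp; ring)
end

section
/- Unitarity of the 7-vertex trigonometric R-matrix (identities (y053)–(y054) of the paper): let z, ħ ∈ ℂ with sin(πz) ≠ 0 and sin(πħ) ≠ 0, and let c₇ ∈ ℂ be arbitrary. Then R(z) · (P · R(−z) · P) = (π²/sin²(πħ) − π²/sin²(πz)) · 1 (the 4×4 identity matrix). -/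
open Matrix Complex

/-- The 7-vertex trigonometric R-matrix `R(z)` with parameters `ħ` (`hbar`) and
`c₇`, in the ordered basis `(e₁⊗e₁, e₁⊗e₂, e₂⊗e₁, e₂⊗e₂)`. -/
noncomputable def R7 (hbar c₇ z : ℂ) : Matrix (Fin 4) (Fin 4) ℂ :=
  !![Real.pi * Complex.cot (Real.pi * hbar) + Real.pi * Complex.cot (Real.pi * z), 0, 0, 0;
     0, Real.pi / Complex.sin (Real.pi * hbar), Real.pi / Complex.sin (Real.pi * z), 0;
     0, Real.pi / Complex.sin (Real.pi * z), Real.pi / Complex.sin (Real.pi * hbar), 0;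
     c₇ * Complex.sin (Real.pi * (hbar + z)), 0, 0,
       Real.pi * Complex.cot (Real.pi * hbar) + Real.pi * Complex.cot (Real.pi * z)]

lemma cot_neg' (w : ℂ) : Complex.cot (-w) = -Complex.cot w := by
  rw [Complex.cot_eq_cos_div_sin, Complex.cot_eq_cos_div_sin, Complex.cos_neg,
    Complex.sin_neg, div_neg]

lemma R7_neg (hbar c₇ z : ℂ) :
    R7 hbar c₇ (-z) =
    !![Real.pi * Complex.cot (Real.pi * hbar) - Real.pi * Complex.cot (Real.pi * z), 0, 0, 0;
       0, Real.pi / Complex.sin (Real.pi * hbar), -(Real.pi / Complex.sin (Real.pi * z)), 0;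
       0, -(Real.pi / Complex.sin (Real.pi * z)), Real.pi / Complex.sin (Real.pi * hbar), 0;
       c₇ * Complex.sin (Real.pi * (hbar - z)), 0, 0,
         Real.pi * Complex.cot (Real.pi * hbar) - Real.pi * Complex.cot (Real.pi * z)] := by
  have h1 : (Real.pi : ℂ) * (-z) = -(Real.pi * z) := by ring
  have h2 : hbar + -z = hbar - z := by ring
  rw [R7, h1, h2, cot_neg', Complex.sin_neg, div_neg]
  ring_nf

lemma inv_sin_sq (w : ℂ) (hw : Complex.sin w ≠ 0) :
    1 / Complex.sin w ^ 2 = Complex.cot w ^ 2 + 1 := by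
  rw [Complex.cot_eq_cos_div_sin, div_pow]
  field_simp
  exact (Complex.cos_sq_add_sin_sq w).symm

lemma key1 (hbar z : ℂ) (hz : Complex.sin (Real.pi * z) ≠ 0)
    (hh : Complex.sin (Real.pi * hbar) ≠ 0) :
    (Real.pi * Complex.cot (Real.pi * hbar) + Real.pi * Complex.cot (Real.pi * z)) *
      (Real.pi * Complex.cot (Real.pi * hbar) - Real.pi * Complex.cot (Real.pi * z)) =
    (Real.pi : ℂ) ^ 2 / Complex.sin (Real.pi * hbar) ^ 2
      - (Real.pi : ℂ) ^ 2 / Complex.sin (Real.pi * z) ^ 2 := by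
  have h1 := inv_sin_sq (Real.pi * hbar) hh
  have h2 := inv_sin_sq (Real.pi * z) hz
  linear_combination ((Real.pi : ℂ) ^ 2) * h2 - ((Real.pi : ℂ) ^ 2) * h1

lemma key2 (hbar c₇ z : ℂ) (hz : Complex.sin (Real.pi * z) ≠ 0)
    (hh : Complex.sin (Real.pi * hbar) ≠ 0) :
    c₇ * Complex.sin (Real.pi * (hbar + z)) *
      (Real.pi * Complex.cot (Real.pi * hbar) - Real.pi * Complex.cot (Real.pi * z)) +
    (Real.pi * Complex.cot (Real.pi * hbar) + Real.pi * Complex.cot (Real.pi * z)) *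
      (c₇ * Complex.sin (Real.pi * (hbar - z))) = 0 := by
  have e1 : (Real.pi : ℂ) * (hbar + z) = Real.pi * hbar + Real.pi * z := by ring
  have e2 : (Real.pi : ℂ) * (hbar - z) = Real.pi * hbar - Real.pi * z := by ring
  rw [Complex.cot_eq_cos_div_sin, Complex.cot_eq_cos_div_sin, e1, e2, Complex.sin_add,
    Complex.sin_sub]
  field_simp
  ring

lemma gen_unitarity (a b u v s t d : ℂ)
    (h1 : (a + b) * (a - b) = d) (h2 : u * u - v * v = d)
    (h3 : s * (a - b) + (a + b) * t = 0) :
    !![a + b, 0, 0, 0; 0, u, v, 0; 0, v, u, 0; s, 0, 0, a + b] *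
      (Pm * !![a - b, 0, 0, 0; 0, u, -v, 0; 0, -v, u, 0; t, 0, 0, a - b] * Pm)
    = d • (1 : Matrix (Fin 4) (Fin 4) ℂ) := by
  ext i j
  fin_cases i <;> fin_cases j <;>
    simp [Pm, Matrix.mul_apply, Fin.sum_univ_four, Matrix.one_apply] <;>
    first
      | ring1
      | linear_combination h1
      | linear_combination h2
      | linear_combination h3

/-- Unitarity of the 7-vertex trigonometric R-matrix (identities (y053)–(y054)
of the paper): `R(z)·(P·R(−z)·P) = (π²/sin²(πħ) − π²/sin²(πz))·1`. -/
theorem sevenvertex_unitarity (hbar c₇ z : ℂ)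
    (hz : Complex.sin (Real.pi * z) ≠ 0) (hh : Complex.sin (Real.pi * hbar) ≠ 0) :
    R7 hbar c₇ z * (Pm * R7 hbar c₇ (-z) * Pm)
      = ((Real.pi : ℂ) ^ 2 / Complex.sin (Real.pi * hbar) ^ 2
          - (Real.pi : ℂ) ^ 2 / Complex.sin (Real.pi * z) ^ 2) •
          (1 : Matrix (Fin 4) (Fin 4) ℂ) := by
  have k1 := key1 hbar z hz hh
  have k2 := key2 hbar c₇ z hz hh
  have huv : (Real.pi : ℂ) / Complex.sin (Real.pi * hbar) * ((Real.pi : ℂ) / Complex.sin (Real.pi * hbar))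
      - (Real.pi : ℂ) / Complex.sin (Real.pi * z) * ((Real.pi : ℂ) / Complex.sin (Real.pi * z))
      = (Real.pi : ℂ) ^ 2 / Complex.sin (Real.pi * hbar) ^ 2
          - (Real.pi : ℂ) ^ 2 / Complex.sin (Real.pi * z) ^ 2 := by
    rw [div_mul_div_comm, div_mul_div_comm]; ring_nf
  rw [R7_neg, R7]
  exact gen_unitarity _ _ _ _ _ _ _ k1 huv k2
end

section
/- Differentiated classical Yang–Baxter equation (identity (q74) of the paper): let M be a positive integer and U ⊆ ℂ an open set with U = −U. Let r : U → Mat_{M²}(ℂ) (matrices indexed by Fin M × Fin M, viewed as operators on ℂ^M⊗ℂ^M) be entrywise complex-differentiable on U, with entrywise derivative ∂r. Assume: (i) skew-symmetry, P·r(−z)·P = −r(z) for all z ∈ U, where P is the tensor flip on ℂ^M⊗ℂ^M; (ii) the classical Yang–Baxter equation [r₁₂(z₁−z₂), r₂₃(z₂−z₃)] + [r₁₂(z₁−z₂), r₁₃(z₁−z₃)] + [r₁₃(z₁−z₃), r₂₃(z₂−z₃)] = 0 for all z₁, z₂, z₃ ∈ ℂ such that z₁−z₂, z₂−z₃, z₁−z₃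 ∈ U. Then for all z₁, z₂, z₃ ∈ ℂ with z₁−z₂, z₂−z₃, z₁−z₃ ∈ U one has the equalities [r₃₁(z₃−z₁) + r₃₂(z₃−z₂), ∂r₁₂(z₁−z₂)] = [r₂₃(z₂−z₃) + r₂₁(z₂−z₁), ∂r₃₁(z₃−z₁)] = [r₁₂(z₁−z₂) + r₁₃(z₁−z₃), ∂r₂₃(z₂−z₃)]. -/
open Matrix

/-- The tensor flip on `ℂ^M ⊗ ℂ^M`. -/
def P2 (M : ℕ) : Matrix (Fin M × Fin M) (Fin M × Fin M) ℂ :=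
  fun p q => if p.1 = q.2 ∧ p.2 = q.1 then 1 else 0

/-- Embedding acting on the 1st and 2nd tensor factors: `X₁₂ = X ⊗ I`. -/
def e12 (M : ℕ) (X : Matrix (Fin M × Fin M) (Fin M × Fin M) ℂ) :
    Matrix (Fin M × Fin M × Fin M) (Fin M × Fin M × Fin M) ℂ :=
  fun p q => X (p.1, p.2.1) (q.1, q.2.1) * (if p.2.2 = q.2.2 then 1 else 0)

/-- Embedding acting on the 2nd and 3rd tensor factors: `X₂₃ = I ⊗ X`. -/
def e23 (M : ℕ) (X : Matrix (Fin M × Fin M) (Fin M × Fin M) ℂ) :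
    Matrix (Fin M × Fin M × Fin M) (Fin M × Fin M × Fin M) ℂ :=
  fun p q => (if p.1 = q.1 then 1 else 0) * X (p.2.1, p.2.2) (q.2.1, q.2.2)

/-- Embedding acting on the 1st and 3rd tensor factors:
`(X₁₃)_{(a,b,c),(a',b',c')} = δ_{b,b'}·X_{(a,c),(a',c')}`. -/
def e13 (M : ℕ) (X : Matrix (Fin M × Fin M) (Fin M × Fin M) ℂ) :
    Matrix (Fin M × Fin M × Fin M) (Fin M × Fin M × Fin M) ℂ :=
  fun p q => X (p.1, p.2.2) (q.1, q.2.2) * (if p.2.1 = q.2.1 then 1 else 0)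

lemma P2_conj_apply {M : ℕ} (A : Matrix (Fin M × Fin M) (Fin M × Fin M) ℂ) (p q) :
    (P2 M * A * P2 M) p q = A (p.2, p.1) (q.2, q.1) := by
  simp [Matrix.mul_apply, P2, Fintype.sum_prod_type, ite_and]

/-- Entrywise derivative of a matrix-valued function. -/
def HD {n : Type*} [Fintype n] (f : ℂ → Matrix n n ℂ) (f' : Matrix n n ℂ) (z : ℂ) : Prop :=
  ∀ p q, HasDerivAt (fun w => f w p q) (f' p q) z

lemma HD.mul {n : Type*} [Fintype n] {f g : ℂ → Matrix n n ℂ} {f' g' : Matrix n n ℂ} {z : ℂ}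
    (hf : HD f f' z) (hg : HD g g' z) :
    HD (fun w => f w * g w) (f' * g z + f z * g') z := by
  intro p q
  have h : HasDerivAt (fun w => ∑ r, f w p r * g w r q)
      (∑ r, (f' p r * g z r q + f z p r * g' r q)) z :=
    HasDerivAt.fun_sum fun r _ => (hf p r).mul (hg r q)
  simpa [Matrix.mul_apply, Matrix.add_apply, Finset.sum_add_distrib] using h

lemma HD.add {n : Type*} [Fintype n] {f g : ℂ → Matrix n n ℂ} {f' g' : Matrix n n ℂ} {z : ℂ}
    (hf : HD f f' z) (hg : HD g g' z) : HD (fun w => f w + g w) (f' + g') z :=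
  fun p q => by simpa [Matrix.add_apply] using (hf p q).fun_add (hg p q)

lemma HD.sub {n : Type*} [Fintype n] {f g : ℂ → Matrix n n ℂ} {f' g' : Matrix n n ℂ} {z : ℂ}
    (hf : HD f f' z) (hg : HD g g' z) : HD (fun w => f w - g w) (f' - g') z :=
  fun p q => by simpa [Matrix.sub_apply] using (hf p q).fun_sub (hg p q)

lemma HD.const {n : Type*} [Fintype n] (A : Matrix n n ℂ) (z : ℂ) :
    HD (fun _ => A) 0 z := fun p q => by simpa using hasDerivAt_const z (A p q)

lemma HD.unique_zero {n : Type*} [Fintype n] {f : ℂ → Matrix n n ℂ} {f' : Matrix n n ℂ} {z : ℂ}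
    (hf : HD f f' z) (hev : ∀ᶠ w in nhds z, f w = 0) : f' = 0 := by
  ext p q
  have h0 : HasDerivAt (fun w => f w p q) 0 z :=
    (hasDerivAt_const z (0:ℂ)).congr_of_eventuallyEq
      (hev.mono fun w hw => by show f w p q = 0; rw [hw]; simp)
  simpa using (hf p q).unique h0

section EmbDeriv
variable {M : ℕ} {r : ℂ → Matrix (Fin M × Fin M) (Fin M × Fin M) ℂ}
  {A : Matrix (Fin M × Fin M) (Fin M × Fin M) ℂ} {z c : ℂ}

lemma HD_e12_shift (h : ∀ p q, HasDerivAt (fun w => r w p q) (A p q) (z - c)) :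
    HD (fun w => e12 M (r (w - c))) (e12 M A) z := by
  intro p q
  have h1 := (h (p.1, p.2.1) (q.1, q.2.1)).comp z ((hasDerivAt_id z).sub_const c)
  simpa [e12] using h1.mul_const (if p.2.2 = q.2.2 then (1:ℂ) else 0)

lemma HD_e13_shift (h : ∀ p q, HasDerivAt (fun w => r w p q) (A p q) (z - c)) :
    HD (fun w => e13 M (r (w - c))) (e13 M A) z := by
  intro p q
  have h1 := (h (p.1, p.2.2) (q.1, q.2.2)).comp z ((hasDerivAt_id z).sub_const c)
  simpa [e13] using h1.mul_const (if p.2.1 = q.2.1 then (1:ℂ) else 0)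

lemma HD_e13_csub (h : ∀ p q, HasDerivAt (fun w => r w p q) (A p q) (c - z)) :
    HD (fun w => e13 M (r (c - w))) (-(e13 M A)) z := by
  intro p q
  have h1 := (h (p.1, p.2.2) (q.1, q.2.2)).comp z ((hasDerivAt_id z).const_sub c)
  have h2 := h1.mul_const (if p.2.1 = q.2.1 then (1:ℂ) else 0)
  have he : (-(e13 M A)) p q
      = A (p.1, p.2.2) (q.1, q.2.2) * (0 - 1) * (if p.2.1 = q.2.1 then (1:ℂ) else 0) := by
    by_cases hpq : p.2.1 = q.2.1 <;> simp [e13, hpq] <;> ring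
  rw [he]; simpa [e13] using h2

lemma HD_e23_csub (h : ∀ p q, HasDerivAt (fun w => r w p q) (A p q) (c - z)) :
    HD (fun w => e23 M (r (c - w))) (-(e23 M A)) z := by
  intro p q
  have h1 := (h (p.2.1, p.2.2) (q.2.1, q.2.2)).comp z ((hasDerivAt_id z).const_sub c)
  have h2 := h1.mul_const (if p.1 = q.1 then (1:ℂ) else 0)
  have he : (-(e23 M A)) p q
      = A (p.2.1, p.2.2) (q.2.1, q.2.2) * (0 - 1) * (if p.1 = q.1 then (1:ℂ) else 0) := by
    by_cases hpq : p.1 = q.1 <;> simp [e23, hpq] <;> ring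
  rw [he]; simpa [e23, mul_comm] using h2

lemma e12_neg (X : Matrix (Fin M × Fin M) (Fin M × Fin M) ℂ) :
    e12 M (-X) = -(e12 M X) := by
  ext p q; by_cases h : p.2.2 = q.2.2 <;> simp [e12, h]

lemma e13_neg (X : Matrix (Fin M × Fin M) (Fin M × Fin M) ℂ) :
    e13 M (-X) = -(e13 M X) := by
  ext p q; by_cases h : p.2.1 = q.2.1 <;> simp [e13, h]

lemma e23_neg (X : Matrix (Fin M × Fin M) (Fin M × Fin M) ℂ) :
    e23 M (-X) = -(e23 M X) := by
  ext p q; by_cases h : p.1 = q.1 <;> simp [e23, h]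

end EmbDeriv

/-- Differentiated classical Yang–Baxter equation (identity (q74) of the
paper).  Here `X₂₁ = e12 (P·X·P)`, `X₃₁ = e13 (P·X·P)`, `X₃₂ = e23 (P·X·P)`. -/
theorem differentiated_CYBE (M : ℕ) (hM : 0 < M) (U : Set ℂ) (hUopen : IsOpen U)
    (hUneg : U = -U)
    (r dr : ℂ → Matrix (Fin M × Fin M) (Fin M × Fin M) ℂ)
    (hderiv : ∀ z ∈ U, ∀ p q, HasDerivAt (fun w => r w p q) (dr z p q) z)
    (hskew : ∀ z ∈ U, P2 M * r (-z) * P2 M = -(r z))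
    (hCYBE : ∀ z₁ z₂ z₃ : ℂ, z₁ - z₂ ∈ U → z₂ - z₃ ∈ U → z₁ - z₃ ∈ U →
      (e12 M (r (z₁ - z₂)) * e23 M (r (z₂ - z₃))
          - e23 M (r (z₂ - z₃)) * e12 M (r (z₁ - z₂)))
        + (e12 M (r (z₁ - z₂)) * e13 M (r (z₁ - z₃))
          - e13 M (r (z₁ - z₃)) * e12 M (r (z₁ - z₂)))
        + (e13 M (r (z₁ - z₃)) * e23 M (r (z₂ - z₃))
          - e23 M (r (z₂ - z₃)) * e13 M (r (z₁ - z₃))) = 0)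
    (z₁ z₂ z₃ : ℂ) (h12 : z₁ - z₂ ∈ U) (h23 : z₂ - z₃ ∈ U) (h13 : z₁ - z₃ ∈ U) :
    ((e13 M (P2 M * r (z₃ - z₁) * P2 M) + e23 M (P2 M * r (z₃ - z₂) * P2 M))
          * e12 M (dr (z₁ - z₂))
        - e12 M (dr (z₁ - z₂))
          * (e13 M (P2 M * r (z₃ - z₁) * P2 M) + e23 M (P2 M * r (z₃ - z₂) * P2 M))
      = (e23 M (r (z₂ - z₃)) + e12 M (P2 M * r (z₂ - z₁) * P2 M))
          * e13 M (P2 M * dr (z₃ - z₁) * P2 M)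
        - e13 M (P2 M * dr (z₃ - z₁) * P2 M)
          * (e23 M (r (z₂ - z₃)) + e12 M (P2 M * r (z₂ - z₁) * P2 M)))
    ∧
    ((e23 M (r (z₂ - z₃)) + e12 M (P2 M * r (z₂ - z₁) * P2 M))
          * e13 M (P2 M * dr (z₃ - z₁) * P2 M)
        - e13 M (P2 M * dr (z₃ - z₁) * P2 M)
          * (e23 M (r (z₂ - z₃)) + e12 M (P2 M * r (z₂ - z₁) * P2 M))
      = (e12 M (r (z₁ - z₂)) + e13 M (r (z₁ - z₃))) * e23 M (dr (z₂ - z₃))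
        - e23 M (dr (z₂ - z₃)) * (e12 M (r (z₁ - z₂)) + e13 M (r (z₁ - z₃)))) := by
  -- negation stability of U
  have hUneg' : ∀ z ∈ U, -z ∈ U := by
    intro z hz
    rw [hUneg]
    simpa using hz
  -- skew-symmetry rewrites
  have s13 : P2 M * r (z₃ - z₁) * P2 M = -r (z₁ - z₃) := by
    have h := hskew (z₁ - z₃) h13
    rwa [show -(z₁ - z₃) = z₃ - z₁ from by ring] at h
  have s23 : P2 M * r (z₃ - z₂) * P2 M = -r (z₂ - z₃) := by
    have h := hskew (z₂ - z₃) h23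
    rwa [show -(z₂ - z₃) = z₃ - z₂ from by ring] at h
  have s12 : P2 M * r (z₂ - z₁) * P2 M = -r (z₁ - z₂) := by
    have h := hskew (z₁ - z₂) h12
    rwa [show -(z₁ - z₂) = z₂ - z₁ from by ring] at h
  -- derivative of skew-symmetry
  have dskew : ∀ z ∈ U, P2 M * dr (-z) * P2 M = dr z := by
    intro z hz
    have hz' : -z ∈ U := hUneg' z hz
    ext p q
    rw [P2_conj_apply]
    have h1 := (hderiv (-z) hz' (p.2, p.1) (q.2, q.1)).comp z ((hasDerivAt_id z).neg)
    have hev : ∀ᶠ w in nhds z, r (-w) (p.2, p.1) (q.2, q.1) = -(r w p q) := by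
      filter_upwards [hUopen.mem_nhds hz] with w hw
      have h2 := congrFun (congrFun (hskew w hw) p) q
      rw [P2_conj_apply] at h2
      simpa using h2
    have h3 : HasDerivAt (fun w => -(r w p q))
        (dr (-z) (p.2, p.1) (q.2, q.1) * -1) z :=
      h1.congr_of_eventuallyEq (hev.mono fun _ h => h.symm)
    have h4 := (hderiv z hz p q).neg
    have h5 := h3.unique h4
    linear_combination -h5
  have d13 : P2 M * dr (z₃ - z₁) * P2 M = dr (z₁ - z₃) := by
    have h := dskew (z₁ - z₃) h13
    rwa [show -(z₁ - z₃) = z₃ - z₁ from by ring] at h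
  -- derivative of the CYBE in z₁
  have hA' : HD (fun w => e12 M (r (w - z₂))) (e12 M (dr (z₁ - z₂))) z₁ :=
    HD_e12_shift (hderiv _ h12)
  have hC' : HD (fun w => e13 M (r (w - z₃))) (e13 M (dr (z₁ - z₃))) z₁ :=
    HD_e13_shift (hderiv _ h13)
  have hB0 : HD (fun _ : ℂ => e23 M (r (z₂ - z₃))) 0 z₁ := HD.const _ _
  have hevA : ∀ᶠ w in nhds z₁,
      ((e12 M (r (w - z₂)) * e23 M (r (z₂ - z₃))
          - e23 M (r (z₂ - z₃)) * e12 M (r (w - z₂)))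
        + (e12 M (r (w - z₂)) * e13 M (r (w - z₃))
          - e13 M (r (w - z₃)) * e12 M (r (w - z₂)))
        + (e13 M (r (w - z₃)) * e23 M (r (z₂ - z₃))
          - e23 M (r (z₂ - z₃)) * e13 M (r (w - z₃)))) = 0 := by
    have o1 : IsOpen {w : ℂ | w - z₂ ∈ U} :=
      hUopen.preimage (continuous_id.sub continuous_const)
    have o2 : IsOpen {w : ℂ | w - z₃ ∈ U} :=
      hUopen.preimage (continuous_id.sub continuous_const)
    filter_upwards [(o1.inter o2).mem_nhds ⟨h12, h13⟩] with w hw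
    exact hCYBE w z₂ z₃ hw.1 h23 hw.2
  have keyA := HD.unique_zero
    ((((hA'.mul hB0).sub (hB0.mul hA')).add ((hA'.mul hC').sub (hC'.mul hA'))).add
      ((hC'.mul hB0).sub (hB0.mul hC'))) hevA
  beta_reduce at keyA
  -- derivative of the CYBE in z₃
  have hA0 : HD (fun _ : ℂ => e12 M (r (z₁ - z₂))) 0 z₃ := HD.const _ _
  have hB' : HD (fun w => e23 M (r (z₂ - w))) (-(e23 M (dr (z₂ - z₃)))) z₃ :=
    HD_e23_csub (hderiv _ h23)
  have hC'' : HD (fun w => e13 M (r (z₁ - w))) (-(e13 M (dr (z₁ - z₃)))) z₃ :=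
    HD_e13_csub (hderiv _ h13)
  have hevB : ∀ᶠ w in nhds z₃,
      ((e12 M (r (z₁ - z₂)) * e23 M (r (z₂ - w))
          - e23 M (r (z₂ - w)) * e12 M (r (z₁ - z₂)))
        + (e12 M (r (z₁ - z₂)) * e13 M (r (z₁ - w))
          - e13 M (r (z₁ - w)) * e12 M (r (z₁ - z₂)))
        + (e13 M (r (z₁ - w)) * e23 M (r (z₂ - w))
          - e23 M (r (z₂ - w)) * e13 M (r (z₁ - w)))) = 0 := by
    have o1 : IsOpen {w : ℂ | z₂ - w ∈ U} :=
      hUopen.preimage (continuous_const.sub continuous_id)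
    have o2 : IsOpen {w : ℂ | z₁ - w ∈ U} :=
      hUopen.preimage (continuous_const.sub continuous_id)
    filter_upwards [(o1.inter o2).mem_nhds ⟨h23, h13⟩] with w hw
    exact hCYBE z₁ z₂ w h12 hw.1 hw.2
  have keyB := HD.unique_zero
    ((((hA0.mul hB').sub (hB'.mul hA0)).add ((hA0.mul hC'').sub (hC''.mul hA0))).add
      ((hC''.mul hB').sub (hB'.mul hC''))) hevB
  beta_reduce at keyB
  rw [s13, s23, s12, d13, e13_neg, e23_neg, e12_neg]
  constructor
  · rw [← sub_eq_zero, ← keyA]; noncomm_ring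
  · rw [← sub_eq_zero, ← keyB]; noncomm_ring
end

section
/- Chain identity from the Yang–Baxter equation (identity (aq2710) of the paper, Appendix C): let M ≥ 1 and let R : ℂ → Mat_{M²}(ℂ) (operators on ℂ^M⊗ℂ^M) satisfy the multiplicative-parameter quantum Yang–Baxter equation: for all a, b ∈ ℂ, R₁₂(a)·R₁₃(ab)·R₂₃(b) = R₂₃(b)·R₁₃(ab)·R₁₂(a) as operators on ℂ^M⊗ℂ^M⊗ℂ^M. Let n ≥ 2, let u₁,…,u_n ∈ ℂ be nonzero, and for distinct a, b ∈ {1,…,n} let R_{ab}(w) denote the operator on (ℂ^M)^{⊗n} acting as R(w) on the a-th and b-th tensor factors and as the identity elsewhere. Then R_{n−1,n}(u_{n−1}/u₁)·R_{n−2,n}(u_{n−2}/u₁)⋯R_{2,n}(u₂/u₁) · R_{1,n}(u_n/u₁) · R_{1,2}(u_n/u₂)·R_{1,3}(u_n/u₃)⋯R_{1,n−1}(u_n/u_{n−1}) = R_{1,2}(u_n/u₂)·R_{1,3}(u_n/u₃)⋯R_{1,n−1}(u_n/u_{n−1}) · R_{1,n}(u_n/u₁) · R_{n−1,n}(u_{n−1}/u₁)·R_{n−2,n}(u_{n−2}/u₁)⋯R_{2,n}(u₂/u₁).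 -/
open Matrix Finset

/-- The operator on `(ℂ^M)^{⊗n}` (matrices indexed by functions `Fin n → Fin M`)
acting as `X` on the `a`-th and `b`-th tensor factors and as the identity
elsewhere. -/
def emb (M n : ℕ) (a b : Fin n) (X : Matrix (Fin M × Fin M) (Fin M × Fin M) ℂ) :
    Matrix (Fin n → Fin M) (Fin n → Fin M) ℂ :=
  fun f g => X (f a, f b) (g a, g b) *
    ∏ c ∈ Finset.univ.filter (fun c => c ≠ a ∧ c ≠ b), (if f c = g c then 1 else 0)

namespace ChainYBEAux

variable {M n : ℕ}

lemma ite_mul_ite (p q r : Prop) [Decidable p] [Decidable q] [Decidable r]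
    (h : r ↔ p ∧ q) :
    (if p then (1:ℂ) else 0) * (if q then 1 else 0) = if r then 1 else 0 := by
  by_cases hp : p <;> by_cases hq : q <;> simp [hp, hq, h]

lemma emb_apply (a b : Fin n) (X : Matrix (Fin M × Fin M) (Fin M × Fin M) ℂ)
    (f g : Fin n → Fin M) :
    emb M n a b X f g = X (f a, f b) (g a, g b) *
      (if (∀ c, c ≠ a → c ≠ b → f c = g c) then (1:ℂ) else 0) := by
  unfold emb
  simp only [Finset.prod_boole]
  by_cases h : ∀ c, c ≠ a → c ≠ b → f c = g c
  · rw [if_pos h, if_pos (fun c hc => by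
      simp only [Finset.mem_filter, Finset.mem_univ, true_and] at hc
      exact h c hc.1 hc.2)]
  · rw [if_neg h, if_neg (fun hall => h (fun c h1 h2 => hall c (by
      simp only [Finset.mem_filter, Finset.mem_univ, true_and]
      exact ⟨h1, h2⟩)))]

/-- Embedding of a three-site operator on sites `a b c`. -/
def E (a b c : Fin n)
    (W : Matrix (Fin M × Fin M × Fin M) (Fin M × Fin M × Fin M) ℂ) :
    Matrix (Fin n → Fin M) (Fin n → Fin M) ℂ :=
  fun f g => W (f a, f b, f c) (g a, g b, g c) *
    (if (∀ d, d ≠ a → d ≠ b → d ≠ c → f d = g d) then (1:ℂ) else 0)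

lemma E_apply (a b c : Fin n)
    (W : Matrix (Fin M × Fin M × Fin M) (Fin M × Fin M × Fin M) ℂ)
    (f g : Fin n → Fin M) :
    E a b c W f g = W (f a, f b, f c) (g a, g b, g c) *
      (if (∀ d, d ≠ a → d ≠ b → d ≠ c → f d = g d) then (1:ℂ) else 0) := rfl

def upd3 (f : Fin n → Fin M) (a b c : Fin n) (p : Fin M × Fin M × Fin M) :
    Fin n → Fin M :=
  Function.update (Function.update (Function.update f a p.1) b p.2.1) c p.2.2

lemma emb_eq_E12 (a b c : Fin n) (hab : a ≠ b) (hac : a ≠ c) (hbc : b ≠ c)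
    (X : Matrix (Fin M × Fin M) (Fin M × Fin M) ℂ) :
    emb M n a b X = E a b c (e12 M X) := by
  ext f g
  rw [emb_apply, E_apply]
  show _ = X (f a, f b) (g a, g b) * (if f c = g c then (1:ℂ) else 0) * _
  rw [mul_assoc]
  congr 1
  refine (ite_mul_ite _ _ _ ?_).symm
  constructor
  · intro h
    exact ⟨h c hac.symm hbc.symm, fun d h1 h2 _ => h d h1 h2⟩
  · rintro ⟨h1, h2⟩ d hd1 hd2
    by_cases hdc : d = c
    · rw [hdc]; exact h1
    · exact h2 d hd1 hd2 hdc

lemma emb_eq_E13 (a b c : Fin n) (hab : a ≠ b) (hac : a ≠ c) (hbc : b ≠ c)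
    (X : Matrix (Fin M × Fin M) (Fin M × Fin M) ℂ) :
    emb M n a c X = E a b c (e13 M X) := by
  ext f g
  rw [emb_apply, E_apply]
  show _ = X (f a, f c) (g a, g c) * (if f b = g b then (1:ℂ) else 0) * _
  rw [mul_assoc]
  congr 1
  refine (ite_mul_ite _ _ _ ?_).symm
  constructor
  · intro h
    exact ⟨h b hab.symm hbc, fun d h1 _ h3 => h d h1 h3⟩
  · rintro ⟨h1, h2⟩ d hd1 hd3
    by_cases hdb : d = b
    · rw [hdb]; exact h1
    · exact h2 d hd1 hdb hd3

lemma emb_eq_E23 (a b c : Fin n) (hab : a ≠ b) (hac : a ≠ c) (hbc : b ≠ c)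
    (X : Matrix (Fin M × Fin M) (Fin M × Fin M) ℂ) :
    emb M n b c X = E a b c (e23 M X) := by
  ext f g
  rw [emb_apply, E_apply]
  show _ = (if f a = g a then (1:ℂ) else 0) * X (f b, f c) (g b, g c) * _
  rw [mul_comm (if f a = g a then (1:ℂ) else 0) (X (f b, f c) (g b, g c)), mul_assoc]
  congr 1
  refine (ite_mul_ite _ _ _ ?_).symm
  constructor
  · intro h
    exact ⟨h a hab hac, fun d _ h2 h3 => h d h2 h3⟩
  · rintro ⟨h1, h2⟩ d hd2 hd3
    by_cases hda : d = a
    · rw [hda]; exact h1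
    · exact h2 d hda hd2 hd3

lemma upd3_spec (f : Fin n → Fin M) (a b c : Fin n)
    (hab : a ≠ b) (hac : a ≠ c) (hbc : b ≠ c) (p : Fin M × Fin M × Fin M) :
    upd3 f a b c p a = p.1 ∧ upd3 f a b c p b = p.2.1 ∧ upd3 f a b c p c = p.2.2 ∧
      ∀ d, d ≠ a → d ≠ b → d ≠ c → upd3 f a b c p d = f d := by
  refine ⟨?_, ?_, ?_, ?_⟩
  · rw [upd3, Function.update_of_ne hac, Function.update_of_ne hab, Function.update_self]
  · rw [upd3, Function.update_of_ne hbc, Function.update_self]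
  · rw [upd3, Function.update_self]
  · intro d h1 h2 h3
    rw [upd3, Function.update_of_ne h3, Function.update_of_ne h2, Function.update_of_ne h1]

lemma E_mul (a b c : Fin n) (hab : a ≠ b) (hac : a ≠ c) (hbc : b ≠ c)
    (W1 W2 : Matrix (Fin M × Fin M × Fin M) (Fin M × Fin M × Fin M) ℂ) :
    E a b c W1 * E a b c W2 = E a b c (W1 * W2) := by
  ext f g
  rw [Matrix.mul_apply, E_apply (W := W1 * W2), Matrix.mul_apply]
  by_cases hfg : ∀ d, d ≠ a → d ≠ b → d ≠ c → f d = g d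
  · rw [if_pos hfg, mul_one]
    have key : ∀ h : Fin n → Fin M,
        E a b c W1 f h * E a b c W2 h g =
        if (∀ d, d ≠ a → d ≠ b → d ≠ c → f d = h d) then
          W1 (f a, f b, f c) (h a, h b, h c) * W2 (h a, h b, h c) (g a, g b, g c)
        else 0 := by
      intro h
      rw [E_apply, E_apply]
      by_cases h1 : ∀ d, d ≠ a → d ≠ b → d ≠ c → f d = h d
      · have h2 : ∀ d, d ≠ a → d ≠ b → d ≠ c → h d = g d := fun d x y z =>
          (h1 d x y z).symm.trans (hfg d x y z)
        rw [if_pos h1, if_pos h1, if_pos h2, mul_one, mul_one]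
      · rw [if_neg h1, if_neg h1, mul_zero, zero_mul]
    rw [Finset.sum_congr rfl (fun h _ => key h), ← Finset.sum_filter]
    refine Finset.sum_nbij' (fun h => (h a, h b, h c)) (fun p => upd3 f a b c p)
      ?_ ?_ ?_ ?_ ?_
    · intro h _; exact Finset.mem_univ _
    · intro p _
      simp only [Finset.mem_filter, Finset.mem_univ, true_and]
      intro d h1 h2 h3
      exact ((upd3_spec f a b c hab hac hbc p).2.2.2 d h1 h2 h3).symm
    · intro h hh
      simp only [Finset.mem_filter, Finset.mem_univ, true_and] at hh
      funext d
      obtain ⟨e1, e2, e3, e4⟩ := upd3_spec f a b c hab hac hbc (h a, h b, h c)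
      by_cases h1 : d = a
      · rw [h1]; exact e1
      by_cases h2 : d = b
      · rw [h2]; exact e2
      by_cases h3 : d = c
      · rw [h3]; exact e3
      · exact (e4 d h1 h2 h3).trans (hh d h1 h2 h3)
    · intro p _
      obtain ⟨e1, e2, e3, _⟩ := upd3_spec f a b c hab hac hbc p
      simp [e1, e2, e3]
    · intro h _; rfl
  · rw [if_neg hfg, mul_zero]
    refine Finset.sum_eq_zero fun h _ => ?_
    rw [E_apply, E_apply]
    by_cases h1 : ∀ d, d ≠ a → d ≠ b → d ≠ c → f d = h d
    · have h2 : ¬ ∀ d, d ≠ a → d ≠ b → d ≠ c → h d = g d := fun h2 =>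
        hfg (fun d x y z => (h1 d x y z).trans (h2 d x y z))
      rw [if_neg h2, mul_zero, mul_zero]
    · rw [if_neg h1, mul_zero, zero_mul]

/-- Local Yang–Baxter equation on any triple of distinct sites. -/
lemma emb_YBE (a b c : Fin n) (hab : a ≠ b) (hac : a ≠ c) (hbc : b ≠ c)
    (X Y Z : Matrix (Fin M × Fin M) (Fin M × Fin M) ℂ)
    (h : e12 M X * e13 M Y * e23 M Z = e23 M Z * e13 M Y * e12 M X) :
    emb M n a b X * emb M n a c Y * emb M n b c Z
      = emb M n b c Z * emb M n a c Y * emb M n a b X := by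
  rw [emb_eq_E12 a b c hab hac hbc X, emb_eq_E13 a b c hab hac hbc Y,
    emb_eq_E23 a b c hab hac hbc Z, E_mul a b c hab hac hbc,
    E_mul a b c hab hac hbc, E_mul a b c hab hac hbc, E_mul a b c hab hac hbc, h]

/-- Product formula for embeddings on disjoint pairs of sites. -/
lemma emb_mul_apply_disjoint (a b c d : Fin n) (hab : a ≠ b) (hcd : c ≠ d)
    (hac : a ≠ c) (had : a ≠ d) (hbc : b ≠ c) (hbd : b ≠ d)
    (X Y : Matrix (Fin M × Fin M) (Fin M × Fin M) ℂ) (f g : Fin n → Fin M) :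
    (emb M n a b X * emb M n c d Y) f g
      = X (f a, f b) (g a, g b) * Y (f c, f d) (g c, g d) *
        (if (∀ e, e ≠ a → e ≠ b → e ≠ c → e ≠ d → f e = g e) then (1:ℂ) else 0) := by
  rw [Matrix.mul_apply]
  set h0 : Fin n → Fin M := Function.update (Function.update f a (g a)) b (g b) with hh0
  have h0a : h0 a = g a := by rw [hh0, Function.update_of_ne hab, Function.update_self]
  have h0b : h0 b = g b := by rw [hh0, Function.update_self]
  have h0o : ∀ e, e ≠ a → e ≠ b → h0 e = f e := fun e h1 h2 => by
    rw [hh0, Function.update_of_ne h2, Function.update_of_ne h1]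
  rw [Finset.sum_eq_single h0]
  · rw [emb_apply, emb_apply, h0a, h0b, h0o c hac.symm hbc.symm, h0o d had.symm hbd.symm]
    rw [if_pos (fun e h1 h2 => (h0o e h1 h2).symm)]
    have hiff : (∀ e, e ≠ c → e ≠ d → h0 e = g e) ↔
        (∀ e, e ≠ a → e ≠ b → e ≠ c → e ≠ d → f e = g e) := by
      constructor
      · intro h e h1 h2 h3 h4
        rw [← h0o e h1 h2]; exact h e h3 h4
      · intro h e h1 h2
        by_cases ea : e = a
        · rw [ea]; exact h0a
        by_cases eb : e = b
        · rw [eb]; exact h0b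
        · rw [h0o e ea eb]; exact h e ea eb h1 h2
    rw [if_congr hiff rfl rfl]
    ring
  · intro h _ hne
    rw [emb_apply, emb_apply]
    by_cases h1 : ∀ e, e ≠ a → e ≠ b → f e = h e
    · by_cases h2 : ∀ e, e ≠ c → e ≠ d → h e = g e
      · exfalso
        apply hne
        funext e
        by_cases ea : e = a
        · rw [ea, h0a]; exact h2 a hac had
        by_cases eb : e = b
        · rw [eb, h0b]; exact h2 b hbc hbd
        · rw [h0o e ea eb]; exact (h1 e ea eb).symm
      · rw [if_neg h2, mul_zero, mul_zero]
    · rw [if_neg h1, mul_zero, zero_mul]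
  · intro hm
    exact absurd (Finset.mem_univ h0) hm

/-- Embeddings on disjoint pairs of sites commute. -/
lemma emb_comm (a b c d : Fin n) (hab : a ≠ b) (hcd : c ≠ d)
    (hac : a ≠ c) (had : a ≠ d) (hbc : b ≠ c) (hbd : b ≠ d)
    (X Y : Matrix (Fin M × Fin M) (Fin M × Fin M) ℂ) :
    Commute (emb M n a b X) (emb M n c d Y) := by
  have h : emb M n a b X * emb M n c d Y = emb M n c d Y * emb M n a b X := by
    ext f g
    rw [emb_mul_apply_disjoint a b c d hab hcd hac had hbc hbd,
      emb_mul_apply_disjoint c d a b hcd hab hac.symm hbc.symm had.symm hbd.symm]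
    have hiff : (∀ e, e ≠ a → e ≠ b → e ≠ c → e ≠ d → f e = g e) ↔
        (∀ e, e ≠ c → e ≠ d → e ≠ a → e ≠ b → f e = g e) :=
      ⟨fun h e h1 h2 h3 h4 => h e h3 h4 h1 h2, fun h e h1 h2 h3 h4 => h e h3 h4 h1 h2⟩
    rw [if_congr hiff rfl rfl]
    ring
  exact h

end ChainYBEAux
/-- Chain identity (aq2710) from the Yang–Baxter equation (Appendix C of the
paper).  Sites are labelled `1,…,n`, site `a` corresponding to `⟨(a-1) % n, _⟩ : Fin n`. -/
theorem chain_identity_from_YBE (M : ℕ) (hM : 1 ≤ M)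
    (R : ℂ → Matrix (Fin M × Fin M) (Fin M × Fin M) ℂ)
    (hYB : ∀ a b : ℂ, e12 M (R a) * e13 M (R (a * b)) * e23 M (R b)
        = e23 M (R b) * e13 M (R (a * b)) * e12 M (R a))
    (n : ℕ) (hn : 2 ≤ n) (u : ℕ → ℂ) (hu : ∀ a, 1 ≤ a → a ≤ n → u a ≠ 0) :
    let site : ℕ → Fin n := fun a => ⟨(a - 1) % n, Nat.mod_lt _ (by omega)⟩
    let A : Matrix (Fin n → Fin M) (Fin n → Fin M) ℂ :=
      ((List.range (n - 2)).map
        (fun j => emb M n (site (n - 1 - j)) (site n) (R (u (n - 1 - j) / u 1)))).prod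
    let B : Matrix (Fin n → Fin M) (Fin n → Fin M) ℂ :=
      emb M n (site 1) (site n) (R (u n / u 1))
    let C : Matrix (Fin n → Fin M) (Fin n → Fin M) ℂ :=
      ((List.range (n - 2)).map
        (fun j => emb M n (site 1) (site (j + 2)) (R (u n / u (j + 2))))).prod
    A * B * C = C * B * A := by
  intro site A B C
  have hsite : ∀ k, 1 ≤ k → k ≤ n → (site k : ℕ) = k - 1 := by
    intro k h1 h2
    show (k - 1) % n = k - 1
    exact Nat.mod_eq_of_lt (by omega)
  have hne : ∀ i j, 1 ≤ i → i ≤ n → 1 ≤ j → j ≤ n → i ≠ j → site i ≠ site j := by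
    intro i j hi1 hi2 hj1 hj2 hij h
    apply hij
    have h2 := congrArg Fin.val h
    rw [hsite i hi1 hi2, hsite j hj1 hj2] at h2
    omega
  have key : ∀ m, m ≤ n - 2 →
      ((List.range m).map
        (fun j => emb M n (site (m + 1 - j)) (site n) (R (u (m + 1 - j) / u 1)))).prod
      * B *
      ((List.range m).map
        (fun j => emb M n (site 1) (site (j + 2)) (R (u n / u (j + 2))))).prod
      = ((List.range m).map
        (fun j => emb M n (site 1) (site (j + 2)) (R (u n / u (j + 2))))).prod
      * B *
      ((List.range m).map
        (fun j => emb M n (site (m + 1 - j)) (site n) (R (u (m + 1 - j) / u 1)))).prod := by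
    intro m
    induction m with
    | zero => intro _; simp
    | succ m ih =>
      intro hm
      have ih' := ih (by omega)
      set Am := ((List.range m).map
        (fun j => emb M n (site (m + 1 - j)) (site n) (R (u (m + 1 - j) / u 1)))).prod
        with hAm
      set Cm := ((List.range m).map
        (fun j => emb M n (site 1) (site (j + 2)) (R (u n / u (j + 2))))).prod with hCm
      set D := emb M n (site (m + 2)) (site n) (R (u (m + 2) / u 1)) with hD
      set Em := emb M n (site 1) (site (m + 2)) (R (u n / u (m + 2))) with hEm
      have hr : List.range (m + 1) = 0 :: (List.range m).map Nat.succ :=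
        List.range_succ_eq_map
      have hfun : ((fun j => emb M n (site (m + 1 + 1 - j)) (site n)
            (R (u (m + 1 + 1 - j) / u 1))) ∘ Nat.succ)
          = fun j => emb M n (site (m + 1 - j)) (site n) (R (u (m + 1 - j) / u 1)) := by
        funext j
        simp only [Function.comp_apply]
        have h2 : m + 1 + 1 - Nat.succ j = m + 1 - j := by omega
        rw [h2]
      have hA : ((List.range (m + 1)).map
          (fun j => emb M n (site (m + 1 + 1 - j)) (site n)
            (R (u (m + 1 + 1 - j) / u 1)))).prod = D * Am := by
        rw [hr, List.map_cons, List.map_map, List.prod_cons, hfun, ← hAm, hD]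
        rfl
      have hC : ((List.range (m + 1)).map
          (fun j => emb M n (site 1) (site (j + 2)) (R (u n / u (j + 2))))).prod
          = Cm * Em := by
        rw [List.range_succ, List.map_append, List.prod_append, List.map_singleton,
          List.prod_singleton, ← hCm, hEm]
      rw [hA, hC]
      -- basic site distinctness
      have h1n : site 1 ≠ site n := hne 1 n (by omega) (by omega) (by omega) le_rfl (by omega)
      have h1m : site 1 ≠ site (m + 2) :=
        hne 1 (m + 2) (by omega) (by omega) (by omega) (by omega) (by omega)
      have hmn : site (m + 2) ≠ site n :=
        hne (m + 2) n (by omega) (by omega) (by omega) le_rfl (by omega)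
      -- D commutes with Cm
      have hDC : Commute D Cm := by
        rw [hCm, hD]
        apply Commute.list_prod_right
        intro x hx
        simp only [List.mem_map, List.mem_range] at hx
        obtain ⟨j, hj, rfl⟩ := hx
        exact ChainYBEAux.emb_comm _ _ _ _ hmn
          (hne 1 (j + 2) (by omega) (by omega) (by omega) (by omega) (by omega))
          (hne (m + 2) 1 (by omega) (by omega) (by omega) (by omega) (by omega))
          (hne (m + 2) (j + 2) (by omega) (by omega) (by omega) (by omega) (by omega))
          (hne n 1 (by omega) le_rfl (by omega) (by omega) (by omega))
          (hne n (j + 2) (by omega) le_rfl (by omega) (by omega) (by omega)) _ _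
      -- Em commutes with Am
      have hEA : Commute Em Am := by
        rw [hAm, hEm]
        apply Commute.list_prod_right
        intro x hx
        simp only [List.mem_map, List.mem_range] at hx
        obtain ⟨j, hj, rfl⟩ := hx
        exact ChainYBEAux.emb_comm _ _ _ _ h1m
          (hne (m + 1 - j) n (by omega) (by omega) (by omega) le_rfl (by omega))
          (hne 1 (m + 1 - j) (by omega) (by omega) (by omega) (by omega) (by omega))
          (hne 1 n (by omega) (by omega) (by omega) le_rfl (by omega))
          (hne (m + 2) (m + 1 - j) (by omega) (by omega) (by omega) (by omega) (by omega))
          (hne (m + 2) n (by omega) (by omega) (by omega) le_rfl (by omega)) _ _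
      -- Yang–Baxter swap
      have hu1 : u 1 ≠ 0 := hu 1 le_rfl (by omega)
      have hum : u (m + 2) ≠ 0 := hu (m + 2) (by omega) (by omega)
      have hprod : u n / u (m + 2) * (u (m + 2) / u 1) = u n / u 1 := by
        field_simp
      have h3 := hYB (u n / u (m + 2)) (u (m + 2) / u 1)
      rw [hprod] at h3
      have hswap : Em * B * D = D * B * Em := by
        rw [hD, hEm]
        exact ChainYBEAux.emb_YBE (site 1) (site (m + 2)) (site n) h1m h1n hmn _ _ _ h3
      calc (D * Am) * B * (Cm * Em)
          = D * (Am * B * Cm) * Em := by simp only [mul_assoc]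
        _ = D * (Cm * B * Am) * Em := by rw [ih']
        _ = (D * Cm) * (B * (Am * Em)) := by simp only [mul_assoc]
        _ = (Cm * D) * (B * (Em * Am)) := by rw [hDC.eq, ← hEA.eq]
        _ = Cm * ((D * B * Em) * Am) := by simp only [mul_assoc]
        _ = Cm * ((Em * B * D) * Am) := by rw [hswap]
        _ = (Cm * Em) * B * (D * Am) := by simp only [mul_assoc]
  have key' := key (n - 2) le_rfl
  have e1 : n - 2 + 1 = n - 1 := by omega
  rw [e1] at key'
  exact key'
end
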